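/- arXiv:2203.15761 — 4 statements merged into one kernel-verified Lean document; each statement's English description precedes it below -/
import Mathlib

section
/- Fix an integer k >= 1 and let P(R^k) be the space of Borel probability measures on R^k with the topology of weak convergence. The set D(G_0^k), consisting of all probability measures on R^k that belong to the domain of attraction of the k-fold product Gumbel distribution G_star(x) = product over i from 1 to k of exp(-e^(-x_i)), is dense in P(R^k). -/
open MeasureTheory Filter Topology Set NNReal

/-- The multivariate cumulative distribution function of a Borel probability measure on `ℝ^k`:
`F(x) = μ(∏ i, (-∞, x i])`. -/
noncomputable def mdistrib {k : ℕ} (μ : ProbabilityMeasure (Fin k → ℝ)) (x : Fin k → ℝ) : ℝ :=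
  (μ (Set.Iic x) : ℝ≥0)

noncomputable def gumbelSF : StieltjesFunction ℝ where
  toFun := fun t => Real.exp (-Real.exp (-t))
  mono' := fun a b hab =>
    Real.exp_le_exp.mpr (neg_le_neg (Real.exp_le_exp.mpr (neg_le_neg hab)))
  right_continuous' := fun x => Continuous.continuousWithinAt (by continuity)

lemma gumbelSF_atBot : Tendsto (fun t => Real.exp (-Real.exp (-t))) atBot (𝓝 0) :=
  Real.tendsto_exp_atBot.comp
    ((tendsto_neg_atTop_atBot).comp (Real.tendsto_exp_atTop.comp tendsto_neg_atBot_atTop))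

lemma gumbelSF_atTop : Tendsto (fun t => Real.exp (-Real.exp (-t))) atTop (𝓝 1) := by
  have h : Tendsto (fun t : ℝ => -Real.exp (-t)) atTop (𝓝 0) := by
    have := Real.tendsto_exp_atBot.comp tendsto_neg_atTop_atBot
    simpa using this.neg
  simpa [Function.comp_def] using (Real.continuous_exp.tendsto 0).comp h

noncomputable def gumbelMeasure : Measure ℝ := gumbelSF.measure

instance : IsProbabilityMeasure gumbelMeasure :=
  gumbelSF.isProbabilityMeasure gumbelSF_atBot gumbelSF_atTop

lemma gumbelMeasure_Iic (t : ℝ) :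
    gumbelMeasure (Iic t) = ENNReal.ofReal (Real.exp (-Real.exp (-t))) := by
  exact (gumbelSF.measure_Iic gumbelSF_atBot t).trans (by rw [sub_zero]; rfl)

noncomputable def productGumbel (k : ℕ) : Measure (Fin k → ℝ) :=
  Measure.pi fun _ => gumbelMeasure

instance (k : ℕ) : IsProbabilityMeasure (productGumbel k) := by
  unfold productGumbel; infer_instance

lemma productGumbel_Iic (k : ℕ) (y : Fin k → ℝ) :
    productGumbel k (Iic y) = ENNReal.ofReal (∏ i, Real.exp (-Real.exp (-y i))) := by
  rw [← pi_univ_Iic, productGumbel, Measure.pi_pi,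
    ENNReal.ofReal_prod_of_nonneg fun i _ => (Real.exp_pos _).le]
  simp [gumbelMeasure_Iic]

lemma slope_one_sub_exp : Tendsto (fun u : ℝ => (1 - Real.exp (-u)) / u) (𝓝[≠] 0) (𝓝 1) := by
  have hd : HasDerivAt (fun u : ℝ => 1 - Real.exp (-u)) 1 0 := by
    have h1 : HasDerivAt (fun u : ℝ => Real.exp (-u)) (Real.exp (-(0:ℝ)) * (-1)) 0 :=
      (hasDerivAt_neg (0:ℝ)).exp
    simpa using h1.const_sub 1
  have := hasDerivAt_iff_tendsto_slope.mp hd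
  refine this.congr' ?_
  filter_upwards [self_mem_nhdsWithin] with u hu
  simp [slope_def_field]

lemma slope_log_one_sub : Tendsto (fun u : ℝ => Real.log (1 - u) / u) (𝓝[≠] 0) (𝓝 (-1)) := by
  have hd : HasDerivAt (fun u : ℝ => Real.log (1 - u)) (-1) 0 := by
    have h1 : HasDerivAt (fun u : ℝ => 1 - u) (-1) 0 := (hasDerivAt_id (0:ℝ)).const_sub 1
    have := h1.log (by norm_num)
    simpa using this
  have := hasDerivAt_iff_tendsto_slope.mp hd
  refine this.congr' ?_
  filter_upwards [self_mem_nhdsWithin] with u hu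
  simp [slope_def_field]

lemma key_limit (S ε : ℝ) (hS : 0 < S) (hε : 0 < ε) (hε1 : ε < 1) :
    Tendsto (fun n : ℕ => ((1 - ε) + ε * Real.exp (-(S / (ε * n)))) ^ n) atTop
      (𝓝 (Real.exp (-S))) := by
  set t : ℕ → ℝ := fun n => S / (ε * n) with ht
  set a : ℕ → ℝ := fun n => ε * (1 - Real.exp (-(t n))) with ha
  have ht_pos : ∀ n : ℕ, 1 ≤ n → 0 < t n := fun n hn =>
    div_pos hS (mul_pos hε (by exact_mod_cast hn))
  have ht0 : Tendsto t atTop (𝓝 0) := by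
    have : t = fun n : ℕ => (S / ε) / n := by
      funext n; rw [ht]; ring
    rw [this]
    exact tendsto_const_div_atTop_nhds_zero_nat _
  have ht0' : Tendsto t atTop (𝓝[≠] 0) := by
    refine tendsto_nhdsWithin_of_tendsto_nhds_of_eventually_within _ ht0 ?_
    filter_upwards [eventually_ge_atTop 1] with n hn
    exact (ht_pos n hn).ne'
  have ha0 : Tendsto a atTop (𝓝 0) := by
    have : Tendsto (fun n => Real.exp (-(t n))) atTop (𝓝 1) := by
      have := (Real.continuous_exp.tendsto 0).comp (by simpa using ht0.neg : Tendsto (fun n => -(t n)) atTop (𝓝 0))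
      simpa [Function.comp_def] using this
    have h2 := (tendsto_const_nhds (x := ε)).mul ((tendsto_const_nhds (x := (1:ℝ))).sub this)
    simpa using h2
  have ha_pos : ∀ n : ℕ, 1 ≤ n → 0 < a n := by
    intro n hn
    have := ht_pos n hn
    have h1 : Real.exp (-(t n)) < 1 := by
      rw [Real.exp_lt_one_iff]; linarith
    exact mul_pos hε (by linarith)
  have ha_lt : ∀ n : ℕ, a n < 1 := by
    intro n
    have h1 : 1 - Real.exp (-(t n)) ≤ 1 := by
      have := Real.exp_pos (-(t n)); linarith
    calc a n ≤ ε * 1 := by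
          apply mul_le_mul_of_nonneg_left h1 hε.le
      _ < 1 := by linarith
  have hna : Tendsto (fun n : ℕ => (n : ℝ) * a n) atTop (𝓝 S) := by
    have h1 : Tendsto (fun n : ℕ => S * ((1 - Real.exp (-(t n))) / t n)) atTop (𝓝 S) := by
      have := (tendsto_const_nhds (x := S)).mul (slope_one_sub_exp.comp ht0')
      simpa using this
    refine h1.congr' ?_
    filter_upwards [eventually_ge_atTop 1] with n hn
    have htn := ht_pos n hn
    have hn0 : (0:ℝ) < n := by exact_mod_cast hn
    rw [ht, ha]
    field_simp
    ring
  have hlog : Tendsto (fun n : ℕ => (n : ℝ) * Real.log (1 - a n)) atTop (𝓝 (-S)) := by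
    have ha0' : Tendsto a atTop (𝓝[≠] 0) := by
      refine tendsto_nhdsWithin_of_tendsto_nhds_of_eventually_within _ ha0 ?_
      filter_upwards [eventually_ge_atTop 1] with n hn
      exact (ha_pos n hn).ne'
    have h1 : Tendsto (fun n : ℕ => ((n:ℝ) * a n) * (Real.log (1 - a n) / a n)) atTop
        (𝓝 (S * (-1))) := hna.mul (slope_log_one_sub.comp ha0')
    rw [show S * (-1) = -S by ring] at h1
    refine h1.congr' ?_
    filter_upwards [eventually_ge_atTop 1] with n hn
    have := (ha_pos n hn).ne'
    field_simp
  have hfin : Tendsto (fun n : ℕ => Real.exp ((n : ℝ) * Real.log (1 - a n))) atTop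
      (𝓝 (Real.exp (-S))) := (Real.continuous_exp.tendsto _).comp hlog
  refine hfin.congr' ?_
  filter_upwards [eventually_ge_atTop 1] with n hn
  have h1 : (0:ℝ) < 1 - a n := by linarith [ha_lt n]
  rw [Real.exp_nat_mul, Real.exp_log h1]
  congr 1
  rw [ha]
  ring

def truncMap (k : ℕ) (m : ℕ) : (Fin k → ℝ) → (Fin k → ℝ) := fun x i => min (x i) m

lemma truncMap_continuous (k m : ℕ) : Continuous (truncMap k m) :=
  continuous_pi fun i => (continuous_apply i).min continuous_const

noncomputable def mixMeasure {k : ℕ} (μ : Measure (Fin k → ℝ)) (ε : ℝ) (m : ℕ) :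
    Measure (Fin k → ℝ) :=
  ENNReal.ofReal (1 - ε) • Measure.map (truncMap k m) μ + ENNReal.ofReal ε • productGumbel k

lemma mixMeasure_isProb {k : ℕ} (μ : Measure (Fin k → ℝ)) [IsProbabilityMeasure μ]
    (ε : ℝ) (hε : 0 ≤ ε) (hε1 : ε ≤ 1) (m : ℕ) : IsProbabilityMeasure (mixMeasure μ ε m) := by
  have : IsProbabilityMeasure (Measure.map (truncMap k m) μ) :=
    Measure.isProbabilityMeasure_map (truncMap_continuous k m).measurable.aemeasurable
  constructor
  simp [mixMeasure, ← ENNReal.ofReal_add (by linarith : (0:ℝ) ≤ 1 - ε) hε]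

lemma mixMeasure_Iic {k : ℕ} (μ : Measure (Fin k → ℝ)) [IsProbabilityMeasure μ]
    (ε : ℝ) (hε : 0 ≤ ε) (hε1 : ε ≤ 1) (m : ℕ) (y : Fin k → ℝ) (hy : ∀ i, (m : ℝ) ≤ y i) :
    mixMeasure μ ε m (Iic y)
      = ENNReal.ofReal ((1 - ε) + ε * ∏ i, Real.exp (-Real.exp (-y i))) := by
  have hpre : truncMap k m ⁻¹' (Iic y) = univ := by
    ext z
    simp only [mem_preimage, mem_Iic, mem_univ, iff_true, Pi.le_def]
    intro i
    exact le_trans (min_le_right _ _) (hy i)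
  have hprod_nonneg : (0:ℝ) ≤ ∏ i, Real.exp (-Real.exp (-y i)) :=
    Finset.prod_nonneg fun i _ => (Real.exp_pos _).le
  rw [mixMeasure, Measure.add_apply, Measure.smul_apply, Measure.smul_apply,
    Measure.map_apply (truncMap_continuous k m).measurable measurableSet_Iic, hpre,
    measure_univ, productGumbel_Iic, smul_eq_mul, smul_eq_mul, mul_one,
    ← ENNReal.ofReal_mul hε, ← ENNReal.ofReal_add (by linarith) (by positivity)]

lemma mix_attracted {k : ℕ} (hk : 1 ≤ k) (μ : Measure (Fin k → ℝ)) [IsProbabilityMeasure μ]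
    (ε : ℝ) (hε : 0 < ε) (hε1 : ε < 1) (m : ℕ) (x : Fin k → ℝ) :
    Tendsto (fun n : ℕ =>
        mdistrib ⟨mixMeasure μ ε m, mixMeasure_isProb μ ε hε.le hε1.le m⟩
          (fun i => 1 * x i + Real.log (ε * n)) ^ n) atTop
      (𝓝 (∏ i, Real.exp (-Real.exp (-x i)))) := by
  haveI : Nonempty (Fin k) := ⟨⟨0, hk⟩⟩
  set S : ℝ := ∑ i, Real.exp (-x i) with hSdef
  have hS : 0 < S := Finset.sum_pos (fun i _ => Real.exp_pos _) Finset.univ_nonempty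
  have hprod : (∏ i, Real.exp (-Real.exp (-x i))) = Real.exp (-S) := by
    rw [← Real.exp_sum, hSdef, ← Finset.sum_neg_distrib]
  rw [hprod]
  refine (key_limit S ε hS hε hε1).congr' ?_
  have h_top : Tendsto (fun n : ℕ => Real.log (ε * n)) atTop atTop :=
    Real.tendsto_log_atTop.comp
      (Tendsto.const_mul_atTop hε tendsto_natCast_atTop_atTop)
  have h_ev : ∀ᶠ n : ℕ in atTop, ∀ i, (m : ℝ) ≤ x i + Real.log (ε * n) := by
    rw [eventually_all]
    intro i
    filter_upwards [h_top.eventually_ge_atTop ((m : ℝ) - x i)] with n hn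
    linarith
  filter_upwards [h_ev, eventually_ge_atTop 1] with n hn hn1
  have hεn : (0:ℝ) < ε * n := mul_pos hε (by exact_mod_cast hn1)
  have hy : ∀ i, (m : ℝ) ≤ 1 * x i + Real.log (ε * n) := by
    intro i; simpa using hn i
  have hmd : mdistrib ⟨mixMeasure μ ε m, mixMeasure_isProb μ ε hε.le hε1.le m⟩
      (fun i => 1 * x i + Real.log (ε * n))
      = ((mixMeasure μ ε m) (Iic fun i => 1 * x i + Real.log (ε * n))).toReal := rfl
  rw [hmd, mixMeasure_Iic μ ε hε.le hε1.le m _ hy]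
  have hexp : ∀ i, Real.exp (-(1 * x i + Real.log (ε * n))) = Real.exp (-x i) * (ε * n)⁻¹ := by
    intro i
    rw [one_mul, neg_add, Real.exp_add, Real.exp_neg (Real.log (ε * n)), Real.exp_log hεn]
  have hsum : ∑ i, Real.exp (-(1 * x i + Real.log (ε * n))) = S / (ε * n) := by
    simp_rw [hexp]
    rw [← Finset.sum_mul, div_eq_mul_inv]
  have hprod2 : (∏ i, Real.exp (-Real.exp (-(1 * x i + Real.log (ε * n)))))
      = Real.exp (-(S / (ε * n))) := by
    rw [← Real.exp_sum]
    congr 1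
    rw [Finset.sum_neg_distrib, hsum]
  rw [hprod2, ENNReal.toReal_ofReal
    (add_nonneg (by linarith) (mul_nonneg hε.le (Real.exp_pos _).le))]

noncomputable def epsSeq (m : ℕ) : ℝ := 1 / ((m : ℝ) + 2)

lemma epsSeq_pos (m : ℕ) : 0 < epsSeq m := by
  unfold epsSeq; positivity

lemma epsSeq_lt_one (m : ℕ) : epsSeq m < 1 := by
  unfold epsSeq
  rw [div_lt_one (by positivity)]
  linarith [Nat.cast_nonneg (α := ℝ) m]

lemma epsSeq_tendsto : Tendsto epsSeq atTop (𝓝 0) := by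
  have h : Tendsto (fun m : ℕ => (m : ℝ) + 2) atTop atTop :=
    tendsto_atTop_add_const_right _ _ tendsto_natCast_atTop_atTop
  have h2 := h.inv_tendsto_atTop
  have : epsSeq = fun m : ℕ => ((m : ℝ) + 2)⁻¹ := by
    funext m; simp [epsSeq, one_div]
  rw [this]
  exact h2.congr fun m => rfl

noncomputable def mixPM {k : ℕ} (μ : ProbabilityMeasure (Fin k → ℝ)) (m : ℕ) :
    ProbabilityMeasure (Fin k → ℝ) :=
  ⟨mixMeasure (μ : Measure (Fin k → ℝ)) (epsSeq m) m,
    mixMeasure_isProb _ _ (epsSeq_pos m).le (epsSeq_lt_one m).le m⟩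

lemma mixPM_tendsto {k : ℕ} (μ : ProbabilityMeasure (Fin k → ℝ)) :
    Tendsto (mixPM μ) atTop (𝓝 μ) := by
  rw [ProbabilityMeasure.tendsto_iff_forall_integral_tendsto]
  intro f
  have hint : ∀ m : ℕ, ∫ x, f x ∂((mixPM μ m : Measure (Fin k → ℝ)))
      = (1 - epsSeq m) * ∫ x, f (truncMap k m x) ∂(μ : Measure (Fin k → ℝ))
        + epsSeq m * ∫ x, f x ∂(productGumbel k) := by
    intro m
    have hmeas : Measurable (truncMap k m) := (truncMap_continuous k m).measurable
    haveI : IsProbabilityMeasure (Measure.map (truncMap k m) (μ : Measure (Fin k → ℝ))) :=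
      Measure.isProbabilityMeasure_map hmeas.aemeasurable
    haveI h1 : IsFiniteMeasure
        (ENNReal.ofReal (1 - epsSeq m) • Measure.map (truncMap k m) (μ : Measure (Fin k → ℝ))) := by
      constructor
      rw [Measure.smul_apply, smul_eq_mul]
      exact ENNReal.mul_lt_top ENNReal.ofReal_lt_top (measure_lt_top _ _)
    haveI h2 : IsFiniteMeasure (ENNReal.ofReal (epsSeq m) • productGumbel k) := by
      constructor
      rw [Measure.smul_apply, smul_eq_mul]
      exact ENNReal.mul_lt_top ENNReal.ofReal_lt_top (measure_lt_top _ _)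
    have hcoe : (mixPM μ m : Measure (Fin k → ℝ))
        = mixMeasure (μ : Measure (Fin k → ℝ)) (epsSeq m) m := rfl
    rw [hcoe, mixMeasure, integral_add_measure (f.integrable _) (f.integrable _),
      integral_smul_measure, integral_smul_measure,
      ENNReal.toReal_ofReal (by linarith [epsSeq_lt_one m] : (0:ℝ) ≤ 1 - epsSeq m),
      ENNReal.toReal_ofReal (epsSeq_pos m).le,
      integral_map hmeas.aemeasurable f.continuous.aestronglyMeasurable]
    simp [smul_eq_mul]
  simp_rw [hint]
  have hI : Tendsto (fun m : ℕ => ∫ x, f (truncMap k m x) ∂(μ : Measure (Fin k → ℝ))) atTop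
      (𝓝 (∫ x, f x ∂(μ : Measure (Fin k → ℝ)))) := by
    refine tendsto_integral_of_dominated_convergence (fun _ => ‖f‖)
      (fun m => (f.continuous.comp (truncMap_continuous k m)).aestronglyMeasurable)
      (integrable_const _) (fun m => ae_of_all _ fun x => f.norm_coe_le_norm _)
      (ae_of_all _ fun x => ?_)
    have hT : Tendsto (fun m : ℕ => truncMap k m x) atTop (𝓝 x) := by
      rw [tendsto_pi_nhds]
      intro i
      refine tendsto_const_nhds.congr' ?_
      filter_upwards [tendsto_natCast_atTop_atTop.eventually_ge_atTop (x i)] with m hm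
      exact (min_eq_left hm).symm
    exact (f.continuous.tendsto x).comp hT
  have hfinal := ((tendsto_const_nhds (x := (1:ℝ)) |>.sub epsSeq_tendsto).mul hI).add
    (epsSeq_tendsto.mul (tendsto_const_nhds (x := ∫ x, f x ∂(productGumbel k))))
  simpa using hfinal

/-- For every `k ≥ 1`, the set `D(G_0^k)` of probability measures on `ℝ^k` belonging to
the domain of attraction of the `k`-fold product Gumbel distribution
`G_⋆ x = ∏ i, exp (-exp (-x i))` is dense in the space of Borel probability measures on
`ℝ^k` with the topology of weak convergence. -/
theorem dense_product_gumbel_domain_of_attraction (k : ℕ) (hk : 1 ≤ k) :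
    Dense {μ : ProbabilityMeasure (Fin k → ℝ) |
      ∃ α β : ℕ → Fin k → ℝ, (∀ n i, 0 < α n i) ∧
        ∀ x : Fin k → ℝ,
          Tendsto (fun n : ℕ => mdistrib μ (fun i => α n i * x i + β n i) ^ n) atTop
            (𝓝 (∏ i, Real.exp (-Real.exp (-x i))))} := by
  intro μ
  refine mem_closure_of_tendsto (mixPM_tendsto μ) (Eventually.of_forall fun m => ?_)
  refine ⟨fun n i => 1, fun n i => Real.log (epsSeq m * n), fun n i => one_pos, fun x => ?_⟩
  exact mix_attracted hk (μ : Measure (Fin k → ℝ)) (epsSeq m) (epsSeq_pos m)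
    (epsSeq_lt_one m) m x
end

section
/- Let P(R) be the space of Borel probability measures on R with the topology of weak convergence. The set D of all probability measures on R that belong to the maximum domain of attraction of some extreme value distribution is not an open subset of P(R): for every F in D and every epsilon > 0 there exists G in P(R) with Levy distance d(F,G) < epsilon such that G is not in D. -/
open MeasureTheory Filter Topology Set NNReal

/-- The cumulative distribution function of a Borel probability measure on `ℝ`:
`F(x) = μ((-∞, x])`. -/
noncomputable def distrib (μ : ProbabilityMeasure ℝ) (x : ℝ) : ℝ :=
  (μ (Set.Iic x) : ℝ≥0)

/-- The generalized extreme value distribution function `G_γ`, with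
`G_γ(x) = exp(-(1+γx)^(-1/γ))` where `1 + γx > 0` (interpreted as
`G_0(x) = exp(-e^(-x))` when `γ = 0`). -/
noncomputable def evCdf (γ : ℝ) (x : ℝ) : ℝ :=
  if γ = 0 then Real.exp (-Real.exp (-x))
  else if 0 < 1 + γ * x then Real.exp (-(1 + γ * x) ^ (-1 / γ))
  else if 0 < γ then 0 else 1

/-- `μ` belongs to the maximum domain of attraction `D(G_γ)`: there are `a n > 0` and `b n`
such that `(F (a n * x + b n)) ^ n → G_γ x` at every continuity point `x` of `G_γ`. -/
def MemDomAttr (γ : ℝ) (μ : ProbabilityMeasure ℝ) : Prop :=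
  ∃ a b : ℕ → ℝ, (∀ n, 0 < a n) ∧
    ∀ x : ℝ, ContinuousAt (evCdf γ) x →
      Tendsto (fun n : ℕ => distrib μ (a n * x + b n) ^ n) atTop (𝓝 (evCdf γ x))

/-- The Lévy distance between two Borel probability measures on `ℝ`. -/
noncomputable def levyDist (μ ν : ProbabilityMeasure ℝ) : ℝ :=
  sInf {ε : ℝ | 0 < ε ∧ ∀ x : ℝ,
    distrib μ (x - ε) - ε ≤ distrib ν x ∧ distrib ν x ≤ distrib μ (x + ε) + ε}

/-! ### Basic properties of `distrib` -/

lemma distrib_nonneg (μ : ProbabilityMeasure ℝ) (x : ℝ) : 0 ≤ distrib μ x :=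
  (μ (Set.Iic x)).coe_nonneg

lemma distrib_le_one (μ : ProbabilityMeasure ℝ) (x : ℝ) : distrib μ x ≤ 1 := by
  have := μ.apply_le_one (Set.Iic x)
  exact_mod_cast this

lemma distrib_mono (μ : ProbabilityMeasure ℝ) {x y : ℝ} (h : x ≤ y) :
    distrib μ x ≤ distrib μ y := by
  have := μ.apply_mono (Set.Iic_subset_Iic.mpr h)
  exact_mod_cast this

lemma distrib_eq_toReal (μ : ProbabilityMeasure ℝ) (x : ℝ) :
    distrib μ x = (μ.toMeasure (Set.Iic x)).toReal := rfl

lemma distrib_eq_one_iff (μ : ProbabilityMeasure ℝ) (x : ℝ) :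
    distrib μ x = 1 ↔ μ.toMeasure (Set.Iic x) = 1 := by
  rw [distrib_eq_toReal]
  constructor
  · intro h
    have hne : μ.toMeasure (Set.Iic x) ≠ ⊤ := measure_ne_top _ _
    rw [← ENNReal.ofReal_toReal hne, h]; simp
  · intro h; rw [h]; simp

lemma exists_distrib_lt_one (μ : ProbabilityMeasure ℝ) : ∃ s, distrib μ s < 1 := by
  by_contra h
  push_neg at h
  have h1 : ∀ s : ℝ, μ.toMeasure (Set.Iic s) = 1 := by
    intro s
    exact (distrib_eq_one_iff μ s).mp (le_antisymm (distrib_le_one μ s) (h s))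
  have h2 : ∀ s : ℝ, μ.toMeasure (Set.Ioi s) = 0 := by
    intro s
    have := measure_compl (measurableSet_Iic (a := s)) (measure_ne_top μ.toMeasure _)
    rw [compl_Iic] at this
    rw [this, h1, measure_univ, tsub_self]
  have huniv : (Set.univ : Set ℝ) = ⋃ n : ℕ, Set.Ioi (-(n : ℝ)) := by
    ext x
    simp only [Set.mem_univ, Set.mem_iUnion, Set.mem_Ioi, true_iff]
    obtain ⟨n, hn⟩ := exists_nat_gt (-x)
    exact ⟨n, by linarith⟩
  have : μ.toMeasure (Set.univ) = 0 := by
    rw [huniv]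
    exact measure_iUnion_null fun n => h2 _
  simp [measure_univ] at this

lemma tendsto_distrib_atTop (μ : ProbabilityMeasure ℝ) :
    Tendsto (distrib μ) atTop (𝓝 1) := by
  have h := tendsto_measure_Iic_atTop μ.toMeasure
  rw [measure_univ] at h
  have h2 := (ENNReal.tendsto_toReal (a := (1 : ENNReal)) (by simp)).comp h
  exact h2

/-! ### The extreme value cdf at the point `0` -/

lemma evCdf_zero (γ : ℝ) : evCdf γ 0 = Real.exp (-1) := by
  unfold evCdf
  by_cases hγ : γ = 0
  · rw [if_pos hγ]; simp
  · rw [if_neg hγ, mul_zero, add_zero, if_pos one_pos, Real.one_rpow]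

lemma continuousAt_evCdf_zero (γ : ℝ) : ContinuousAt (evCdf γ) 0 := by
  by_cases hγ : γ = 0
  · subst hγ
    have he : evCdf 0 = fun x => Real.exp (-Real.exp (-x)) :=
      funext fun x => if_pos rfl
    rw [he]
    fun_prop
  · have h1 : ContinuousAt (fun x : ℝ => 1 + γ * x) 0 := by fun_prop
    have h3 : ContinuousAt (fun x : ℝ => Real.exp (-(1 + γ * x) ^ (-1 / γ))) 0 :=
      ((h1.rpow_const (Or.inl (by norm_num))).neg).rexp
    apply h3.congr
    have hopen : IsOpen {x : ℝ | 0 < 1 + γ * x} := isOpen_lt continuous_const (by fun_prop)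
    have hmem : (0 : ℝ) ∈ {x : ℝ | 0 < 1 + γ * x} := by simp
    filter_upwards [hopen.mem_nhds hmem] with x hx
    rw [evCdf, if_neg hγ, if_pos hx]

/-- A distribution whose cdf never takes values in `(p, 1)` for some `p < 1`
is in no domain of attraction. -/
lemma not_memDomAttr (ν : ProbabilityMeasure ℝ) (p : ℝ) (hp0 : 0 ≤ p) (hp1 : p < 1)
    (hF : ∀ y, distrib ν y ≤ p ∨ distrib ν y = 1) : ¬ ∃ γ : ℝ, MemDomAttr γ ν := by
  rintro ⟨γ, a, b, ha, h⟩
  have h0 := h 0 (continuousAt_evCdf_zero γ)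
  rw [evCdf_zero] at h0
  simp only [mul_zero, zero_add] at h0
  have hppow : Tendsto (fun n : ℕ => p ^ n) atTop (𝓝 0) :=
    tendsto_pow_atTop_nhds_zero_of_lt_one hp0 hp1
  have hev : ∀ᶠ n in atTop, p ^ n < distrib ν (b n) ^ n :=
    hppow.eventually_lt h0 (Real.exp_pos _)
  have hev1 : ∀ᶠ n in atTop, distrib ν (b n) ^ n = 1 := by
    filter_upwards [hev] with n hn
    rcases hF (b n) with hle | he
    · exact absurd (pow_le_pow_left₀ (distrib_nonneg ν _) hle n) (not_le.mpr hn)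
    · rw [he, one_pow]
  have : Real.exp (-1) = 1 :=
    tendsto_nhds_unique h0 (tendsto_const_nhds.congr' (hev1.mono fun n hn => hn.symm))
  have hlt : Real.exp (-1) < 1 := Real.exp_lt_one_iff.mpr (by norm_num)
  linarith

/-! ### The truncation construction -/

/-- The push-forward of `μ` under `x ↦ min x t`: all mass above `t` is moved to the atom `t`. -/
noncomputable def pushMin (μ : ProbabilityMeasure ℝ) (t : ℝ) : ProbabilityMeasure ℝ :=
  ⟨μ.toMeasure.map (fun x => min x t),
    by exact Measure.isProbabilityMeasure_map (measurable_id.min measurable_const).aemeasurable⟩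

lemma pushMin_apply (μ : ProbabilityMeasure ℝ) (t : ℝ) {s : Set ℝ} (hs : MeasurableSet s) :
    (pushMin μ t).toMeasure s = μ.toMeasure ((fun x => min x t) ⁻¹' s) :=
  Measure.map_apply (measurable_id.min measurable_const) hs

lemma distrib_pushMin (μ : ProbabilityMeasure ℝ) (t : ℝ) (y : ℝ) :
    distrib (pushMin μ t) y = if t ≤ y then 1 else distrib μ y := by
  have h := pushMin_apply μ t (measurableSet_Iic (a := y))
  by_cases hty : t ≤ y
  · rw [if_pos hty]
    have hpre : (fun x : ℝ => min x t) ⁻¹' (Set.Iic y) = Set.univ := by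
      ext x
      simp only [Set.mem_preimage, Set.mem_Iic, Set.mem_univ, iff_true]
      exact le_trans (min_le_right x t) hty
    show ((pushMin μ t).toMeasure (Set.Iic y)).toReal = 1
    rw [h, hpre, measure_univ, ENNReal.toReal_one]
  · rw [if_neg hty]
    push_neg at hty
    have hpre : (fun x : ℝ => min x t) ⁻¹' (Set.Iic y) = Set.Iic y := by
      ext x
      simp only [Set.mem_preimage, Set.mem_Iic, min_le_iff]
      exact or_iff_left (not_le.mpr hty)
    show ((pushMin μ t).toMeasure (Set.Iic y)).toReal = (μ.toMeasure (Set.Iic y)).toReal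
    rw [h, hpre]

lemma pushMin_not_mem (μ : ProbabilityMeasure ℝ) (t : ℝ) (h : distrib μ t < 1) :
    ¬ ∃ γ : ℝ, MemDomAttr γ (pushMin μ t) := by
  apply not_memDomAttr _ (distrib μ t) (distrib_nonneg μ t) h
  intro y
  rw [distrib_pushMin]
  by_cases hty : t ≤ y
  · rw [if_pos hty]; right; rfl
  · rw [if_neg hty]; left; exact distrib_mono μ (le_of_lt (not_le.mp hty))

lemma levyDist_pushMin_le (μ : ProbabilityMeasure ℝ) (t ε : ℝ) (hε : 0 < ε)
    (h : 1 - ε ≤ distrib μ (t + ε)) : levyDist μ (pushMin μ t) ≤ ε := by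
  apply csInf_le ⟨0, fun x hx => le_of_lt hx.1⟩
  refine ⟨hε, fun x => ⟨?_, ?_⟩⟩
  · have h1 : distrib μ x ≤ distrib (pushMin μ t) x := by
      rw [distrib_pushMin]
      split
      · exact distrib_le_one μ x
      · exact le_rfl
    have h2 : distrib μ (x - ε) ≤ distrib μ x := distrib_mono μ (by linarith)
    linarith
  · rw [distrib_pushMin]
    split
    · rename_i hle
      have : distrib μ (t + ε) ≤ distrib μ (x + ε) := distrib_mono μ (by linarith)
      linarith
    · have : distrib μ x ≤ distrib μ (x + ε) := distrib_mono μ (by linarith)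
      linarith

/-- A choice of truncation point: the cdf is still `< 1` at `t`, but at least `1 - ε` at
`t + ε`. -/
lemma exists_good_t (μ : ProbabilityMeasure ℝ) (ε : ℝ) (hε : 0 < ε) :
    ∃ t, distrib μ t < 1 ∧ 1 - ε ≤ distrib μ (t + ε) := by
  by_cases hall : ∀ s, distrib μ s < 1
  · have h1 : ∀ᶠ s in atTop, 1 - ε < distrib μ s :=
      (tendsto_distrib_atTop μ).eventually (eventually_gt_nhds (by linarith))
    obtain ⟨s0, hs0⟩ := h1.exists
    exact ⟨s0, hall s0, le_trans (le_of_lt hs0) (distrib_mono μ (by linarith))⟩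
  · push_neg at hall
    obtain ⟨s1, hs1⟩ := hall
    have hs1' : distrib μ s1 = 1 := le_antisymm (distrib_le_one μ s1) hs1
    set A : Set ℝ := {s | distrib μ s = 1} with hA
    have hAne : A.Nonempty := ⟨s1, hs1'⟩
    obtain ⟨s2, hs2⟩ := exists_distrib_lt_one μ
    have hbdd : BddBelow A := by
      refine ⟨s2, fun s hs => ?_⟩
      by_contra hlt
      push_neg at hlt
      have := distrib_mono μ (le_of_lt hlt)
      rw [hs] at this
      linarith
    set m := sInf A with hm
    refine ⟨m - ε / 2, ?_, ?_⟩
    · have hnotmem : m - ε / 2 ∉ A := fun hmem => by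
        have := csInf_le hbdd hmem
        rw [← hm] at this
        linarith
      have hle := distrib_le_one μ (m - ε / 2)
      exact lt_of_le_of_ne hle hnotmem
    · obtain ⟨s, hsA, hslt⟩ := exists_lt_of_csInf_lt hAne (show m < m + ε / 2 by linarith)
      have : distrib μ s ≤ distrib μ (m - ε / 2 + ε) :=
        distrib_mono μ (by linarith)
      rw [hsA] at this
      linarith

/-! ### The uniform distribution on `(0,1)` and its domain of attraction -/

/-- The uniform distribution on `(0,1)`. -/
noncomputable def unif : ProbabilityMeasure ℝ :=
  ⟨MeasureTheory.volume.restrict (Set.Ioo (0:ℝ) 1),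
    ⟨by rw [Measure.restrict_apply_univ, Real.volume_Ioo]; norm_num⟩⟩

lemma distrib_unif_of_mem {y : ℝ} (h0 : 0 ≤ y) (h1 : y ≤ 1) : distrib unif y = y := by
  rw [distrib_eq_toReal]
  have : unif.toMeasure (Set.Iic y) = ENNReal.ofReal y := by
    rw [show unif.toMeasure = MeasureTheory.volume.restrict (Set.Ioo (0:ℝ) 1) from rfl,
      Measure.restrict_apply measurableSet_Iic]
    apply le_antisymm
    · have hsub : Set.Iic y ∩ Set.Ioo (0:ℝ) 1 ⊆ Set.Ioc 0 y := fun x hx =>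
        ⟨hx.2.1, hx.1⟩
      calc MeasureTheory.volume (Set.Iic y ∩ Set.Ioo (0:ℝ) 1)
          ≤ MeasureTheory.volume (Set.Ioc (0:ℝ) y) := measure_mono hsub
        _ = ENNReal.ofReal y := by rw [Real.volume_Ioc, sub_zero]
    · have hsub : Set.Ioo (0:ℝ) y ⊆ Set.Iic y ∩ Set.Ioo (0:ℝ) 1 := fun x hx =>
        ⟨le_of_lt hx.2, hx.1, lt_of_lt_of_le hx.2 h1⟩
      calc ENNReal.ofReal y = MeasureTheory.volume (Set.Ioo (0:ℝ) y) := by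
            rw [Real.volume_Ioo, sub_zero]
        _ ≤ _ := measure_mono hsub
  rw [this, ENNReal.toReal_ofReal h0]

lemma distrib_unif_of_ge {y : ℝ} (h : 1 ≤ y) : distrib unif y = 1 := by
  rw [distrib_eq_toReal]
  have : unif.toMeasure (Set.Iic y) = 1 := by
    rw [show unif.toMeasure = MeasureTheory.volume.restrict (Set.Ioo (0:ℝ) 1) from rfl,
      Measure.restrict_apply measurableSet_Iic]
    have hss : Set.Iic y ∩ Set.Ioo (0:ℝ) 1 = Set.Ioo (0:ℝ) 1 :=
      Set.inter_eq_self_of_subset_right (fun x hx => le_trans (le_of_lt hx.2) h)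
    rw [hss, Real.volume_Ioo]
    norm_num
  rw [this, ENNReal.toReal_one]

lemma evCdf_neg_one_of_ge {x : ℝ} (h : 1 ≤ x) : evCdf (-1) x = 1 := by
  rw [evCdf, if_neg (by norm_num), if_neg (by nlinarith), if_neg (by norm_num)]

lemma evCdf_neg_one_of_lt {x : ℝ} (h : x < 1) : evCdf (-1) x = Real.exp (x - 1) := by
  rw [evCdf, if_neg (by norm_num), if_pos (by nlinarith)]
  norm_num
  ring_nf

/-- The uniform distribution on `(0,1)` lies in the domain of attraction of `G₋₁`
(the reversed Weibull family). -/
lemma memDomAttr_unif : MemDomAttr (-1) unif := by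
  refine ⟨fun n => ((max n 1 : ℕ) : ℝ)⁻¹, fun n => 1 - ((max n 1 : ℕ) : ℝ)⁻¹, ?_, ?_⟩
  · intro n
    have : (0 : ℝ) < ((max n 1 : ℕ) : ℝ) := by
      have : 1 ≤ max n 1 := le_max_right n 1
      exact_mod_cast lt_of_lt_of_le zero_lt_one (by exact_mod_cast this)
    exact inv_pos.mpr this
  · intro x _
    by_cases hx : 1 ≤ x
    · rw [evCdf_neg_one_of_ge hx]
      have heq : ∀ n : ℕ,
          distrib unif (((max n 1 : ℕ) : ℝ)⁻¹ * x + (1 - ((max n 1 : ℕ) : ℝ)⁻¹)) ^ n = 1 := by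
        intro n
        have hN : (0 : ℝ) < ((max n 1 : ℕ) : ℝ) := by
          have h1 : 1 ≤ max n 1 := le_max_right n 1
          exact_mod_cast lt_of_lt_of_le zero_lt_one (by exact_mod_cast h1)
        have harg : 1 ≤ ((max n 1 : ℕ) : ℝ)⁻¹ * x + (1 - ((max n 1 : ℕ) : ℝ)⁻¹) := by
          have : 0 ≤ ((max n 1 : ℕ) : ℝ)⁻¹ * (x - 1) :=
            mul_nonneg (inv_nonneg.mpr (le_of_lt hN)) (by linarith)
          nlinarith [this]
        rw [distrib_unif_of_ge harg, one_pow]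
      have : (fun n : ℕ =>
            distrib unif (((max n 1 : ℕ) : ℝ)⁻¹ * x + (1 - ((max n 1 : ℕ) : ℝ)⁻¹)) ^ n)
          = fun _ : ℕ => (1 : ℝ) := funext heq
      rw [this]
      exact tendsto_const_nhds
    · push_neg at hx
      rw [evCdf_neg_one_of_lt hx]
      have hmain := Real.tendsto_one_add_div_pow_exp (x - 1)
      apply hmain.congr'
      filter_upwards [eventually_ge_atTop (max 1 ⌈1 - x⌉₊)] with n hn
      have hn1 : 1 ≤ n := le_trans (le_max_left _ _) hn
      have hmax : max n 1 = n := max_eq_left hn1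
      have hnR : (0 : ℝ) < (n : ℝ) := by exact_mod_cast hn1
      have hxc : 1 - x ≤ (n : ℝ) := by
        calc 1 - x ≤ (⌈1 - x⌉₊ : ℝ) := Nat.le_ceil _
          _ ≤ (n : ℝ) := by exact_mod_cast le_trans (le_max_right _ _) hn
      have harg : ((max n 1 : ℕ) : ℝ)⁻¹ * x + (1 - ((max n 1 : ℕ) : ℝ)⁻¹)
          = 1 + (x - 1) / (n : ℝ) := by
        rw [hmax]
        field_simp
        ring
      have hge0 : 0 ≤ 1 + (x - 1) / (n : ℝ) := by
        rw [div_eq_mul_inv]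
        have h1 : (1 - x) * (n : ℝ)⁻¹ ≤ (n : ℝ) * (n : ℝ)⁻¹ :=
          mul_le_mul_of_nonneg_right hxc (inv_nonneg.mpr (le_of_lt hnR))
        rw [mul_inv_cancel₀ (ne_of_gt hnR)] at h1
        nlinarith
      have hle1 : 1 + (x - 1) / (n : ℝ) ≤ 1 := by
        have : (x - 1) / (n : ℝ) ≤ 0 :=
          div_nonpos_of_nonpos_of_nonneg (by linarith) (le_of_lt hnR)
        linarith
      rw [harg, distrib_unif_of_mem hge0 hle1]

/-! ### The truncations of `unif` converge weakly to `unif` -/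

noncomputable def tk (k : ℕ) : ℝ := 1 - ((k : ℝ) + 1)⁻¹

noncomputable def dk (k : ℕ) : ℝ≥0 := ((k : ℝ≥0) + 1)⁻¹

lemma tendsto_pushMin_unif :
    Tendsto (fun k : ℕ => pushMin unif (tk k)) atTop (𝓝 unif) := by
  apply tendsto_of_forall_isOpen_le_liminf
  intro G hG
  have key : ∀ k : ℕ,
      unif.toMeasure G ≤ (pushMin unif (tk k)).toMeasure G + (dk k : ENNReal) := by
    intro k
    have hGm : MeasurableSet G := hG.measurableSet
    rw [pushMin_apply unif (tk k) hGm]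
    have hsub : G ⊆ ((fun x => min x (tk k)) ⁻¹' G) ∪ Set.Ici (tk k) := by
      intro x hx
      rcases lt_or_ge x (tk k) with h | h
      · left
        simpa [Set.mem_preimage, min_eq_left (le_of_lt h)] using hx
      · exact Or.inr h
    have hIci : unif.toMeasure (Set.Ici (tk k)) ≤ (dk k : ENNReal) := by
      rw [show unif.toMeasure = MeasureTheory.volume.restrict (Set.Ioo (0:ℝ) 1) from rfl,
        Measure.restrict_apply measurableSet_Ici]
      have hsub2 : Set.Ici (tk k) ∩ Set.Ioo (0:ℝ) 1 ⊆ Set.Ico (tk k) 1 :=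
        fun x hx => ⟨hx.1, hx.2.2⟩
      calc MeasureTheory.volume (Set.Ici (tk k) ∩ Set.Ioo (0:ℝ) 1)
          ≤ MeasureTheory.volume (Set.Ico (tk k) 1) := measure_mono hsub2
        _ = ENNReal.ofReal (1 - tk k) := Real.volume_Ico
        _ = (dk k : ENNReal) := by
            rw [tk, sub_sub_cancel, ← ENNReal.ofReal_coe_nnreal]
            congr 1
    calc unif.toMeasure G
        ≤ unif.toMeasure (((fun x => min x (tk k)) ⁻¹' G) ∪ Set.Ici (tk k)) :=
          measure_mono hsub
      _ ≤ unif.toMeasure ((fun x => min x (tk k)) ⁻¹' G) + unif.toMeasure (Set.Ici (tk k)) :=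
          measure_union_le _ _
      _ ≤ _ := by gcongr
  have key2 : ∀ k : ℕ, unif G ≤ (pushMin unif (tk k)) G + dk k := by
    intro k
    have := key k
    rw [← ProbabilityMeasure.ennreal_coeFn_eq_coeFn_toMeasure,
      ← ProbabilityMeasure.ennreal_coeFn_eq_coeFn_toMeasure] at this
    exact_mod_cast this
  have h1 : ∀ k : ℕ, unif G - dk k ≤ (pushMin unif (tk k)) G :=
    fun k => tsub_le_iff_right.mpr (key2 k)
  have hδ : Tendsto dk atTop (𝓝 0) := by
    rw [← NNReal.tendsto_coe]
    simp only [NNReal.coe_zero]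
    refine tendsto_one_div_add_atTop_nhds_zero_nat.congr fun k => ?_
    simp [dk, one_div]
  have h2 : Tendsto (fun k : ℕ => unif G - dk k) atTop (𝓝 (unif G)) := by
    have := Tendsto.sub
      (tendsto_const_nhds : Tendsto (fun _ : ℕ => unif G) atTop (𝓝 (unif G))) hδ
    simpa using this
  calc (unif G : ℝ≥0) = liminf (fun k : ℕ => unif G - dk k) atTop := h2.liminf_eq.symm
    _ ≤ liminf (fun k : ℕ => (pushMin unif (tk k)) G) atTop :=
        liminf_le_liminf (Eventually.of_forall h1)
          (isBoundedUnder_of ⟨0, fun k => zero_le⟩)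
          (IsBoundedUnder.isCoboundedUnder_ge
            (isBoundedUnder_of ⟨1, fun k => ProbabilityMeasure.apply_le_one _ _⟩))

lemma distrib_unif_tk_lt_one (k : ℕ) : distrib unif (tk k) < 1 := by
  have hpos : (0 : ℝ) < ((k : ℝ) + 1)⁻¹ := by positivity
  have hle : ((k : ℝ) + 1)⁻¹ ≤ 1 := by
    rw [inv_le_one_iff₀]
    right
    have : (0 : ℝ) ≤ (k : ℝ) := Nat.cast_nonneg k
    linarith
  rw [tk, distrib_unif_of_mem (by linarith) (by linarith)]
  linarith

/-- The set `D` of distributions on `ℝ` in the maximum domain of attraction of some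
extreme value distribution is not open: for every `F ∈ D` and every `ε > 0` there exists
`G ∉ D` with Lévy distance `d(F, G) < ε`. -/
theorem not_isOpen_domain_of_attraction :
    ¬ IsOpen {μ : ProbabilityMeasure ℝ | ∃ γ : ℝ, MemDomAttr γ μ} ∧
      ∀ μ : ProbabilityMeasure ℝ, (∃ γ : ℝ, MemDomAttr γ μ) →
        ∀ ε > (0 : ℝ), ∃ ν : ProbabilityMeasure ℝ,
          levyDist μ ν < ε ∧ ¬ (∃ γ : ℝ, MemDomAttr γ ν) := by
  constructor
  · intro hopen
    have hmem : unif ∈ {μ : ProbabilityMeasure ℝ | ∃ γ : ℝ, MemDomAttr γ μ} :=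
      ⟨-1, memDomAttr_unif⟩
    have hev := tendsto_pushMin_unif.eventually (hopen.eventually_mem hmem)
    obtain ⟨k, hk⟩ := hev.exists
    exact pushMin_not_mem unif (tk k) (distrib_unif_tk_lt_one k) hk
  · intro μ _ ε hε
    obtain ⟨t, ht1, ht2⟩ := exists_good_t μ (ε / 2) (by linarith)
    refine ⟨pushMin μ t, ?_, pushMin_not_mem μ t ht1⟩
    have := levyDist_pushMin_le μ t (ε / 2) (by linarith) ht2
    linarith
end

section
/- Fix an integer k >= 2. Let S be a nowhere dense subset of the space P(R) of Borel probability measures on R with the topology of weak convergence. Then the set { F in P(R^k) : the first one-dimensional marginal of F belongs to S } is nowhere dense in the space P(R^k) of Borel probability measures on R^k with the topology of weak convergence. -/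
open MeasureTheory Filter Topology Set NNReal

/-- The first one-dimensional marginal of a Borel probability measure on `ℝ^k` (for
`0 < k`): the pushforward under the projection onto the first coordinate. -/
noncomputable def firstMarginal {k : ℕ} (hk : 0 < k) (μ : ProbabilityMeasure (Fin k → ℝ)) :
    ProbabilityMeasure ℝ :=
  μ.map (f := fun y => y ⟨0, hk⟩) (measurable_pi_apply _).aemeasurable

/-- Through any finite family of points in `ℝ^k` with pairwise-distinct `i0`-coordinates one
can pass the graph of a continuous section of the `i0`-th coordinate projection. -/
lemma exists_interp_section {k : ℕ} (i0 : Fin k) (F : Set (Fin k → ℝ)) (hF : F.Finite)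
    (hinj : Set.InjOn (fun z => z i0) F) :
    ∃ s : ℝ → (Fin k → ℝ), Continuous s ∧ (∀ t, s t i0 = t) ∧ ∀ z ∈ F, s (z i0) = z := by
  classical
  obtain ⟨δ, hδpos, hδ⟩ : ∃ δ : ℝ, 0 < δ ∧
      ∀ z ∈ F, ∀ w ∈ F, z i0 ≠ w i0 → δ ≤ |z i0 - w i0| := by
    by_cases hne : ((hF.toFinset ×ˢ hF.toFinset).filter fun p => p.1 i0 ≠ p.2 i0).Nonempty
    · obtain ⟨p, hp, hmin⟩ := Finset.exists_min_image _ (fun p => |p.1 i0 - p.2 i0|) hne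
      simp only [Finset.mem_filter, Finset.mem_product, hF.mem_toFinset] at hp
      refine ⟨|p.1 i0 - p.2 i0|, abs_pos.mpr (sub_ne_zero.mpr hp.2), fun z hz w hw hzw => ?_⟩
      exact hmin (z, w) (by simp [Finset.mem_filter, Finset.mem_product, hF.mem_toFinset,
        hz, hw, hzw])
    · refine ⟨1, one_pos, fun z hz w hw hzw => absurd ⟨(z, w), ?_⟩ hne⟩
      simp [Finset.mem_filter, Finset.mem_product, hF.mem_toFinset, hz, hw, hzw]
  refine ⟨fun t j => if j = i0 then t else
      ∑ z ∈ hF.toFinset, z j * max 0 (1 - |t - z i0| * (2 / δ)), ?_, ?_, ?_⟩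
  · apply continuous_pi
    intro j
    by_cases hj : j = i0
    · simp only [if_pos hj]
      exact continuous_id
    · simp only [if_neg hj]
      refine continuous_finset_sum _ fun z _ => continuous_const.mul ?_
      exact continuous_const.max
        (continuous_const.sub (((continuous_sub_right (z i0)).abs).mul continuous_const))
  · intro t; simp
  · intro z0 hz0
    funext j
    by_cases hj : j = i0
    · subst hj; simp
    · simp only [if_neg hj]
      rw [Finset.sum_eq_single_of_mem z0 (hF.mem_toFinset.mpr hz0)]
      · simp
      · intro z hz hne
        have h1 : z0 i0 ≠ z i0 := fun h => hne (hinj (hF.mem_toFinset.mp hz) hz0 h.symm)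
        have h2 : δ ≤ |z0 i0 - z i0| := hδ z0 hz0 z (hF.mem_toFinset.mp hz) h1
        have h3 : (2 : ℝ) ≤ |z0 i0 - z i0| * (2 / δ) := by
          calc (2 : ℝ) = δ * (2 / δ) := by field_simp
          _ ≤ |z0 i0 - z i0| * (2 / δ) :=
            mul_le_mul_of_nonneg_right h2 (by positivity)
        have h4 : 1 - |z0 i0 - z i0| * (2 / δ) ≤ 0 := by linarith
        rw [max_eq_left h4, mul_zero]

/-- For `k ≥ 2`, if `S` is a nowhere dense set of Borel probability measures on `ℝ`, then
the set of probability measures on `ℝ^k` whose first one-dimensional marginal belongs to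
`S` is nowhere dense in the space of Borel probability measures on `ℝ^k` (both spaces
carrying the topology of weak convergence). -/
theorem isNowhereDense_firstMarginal_preimage (k : ℕ) (hk : 2 ≤ k)
    (S : Set (ProbabilityMeasure ℝ)) (hS : IsNowhereDense S) :
    IsNowhereDense {μ : ProbabilityMeasure (Fin k → ℝ) |
      firstMarginal (by omega) μ ∈ S} := by
  classical
  have hk0 : 0 < k := by omega
  set i0 : Fin k := ⟨0, hk0⟩ with hi0def
  have hfm_cont : Continuous (firstMarginal hk0) :=
    ProbabilityMeasure.continuous_map (continuous_apply i0)
  -- an injection from cell indices to ℕ, used to make first coordinates of anchors distinct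
  obtain ⟨e, he⟩ := Countable.exists_injective_nat (Fin k → ℤ)
  set ψ : (Fin k → ℤ) → ℝ := fun c => 1 / (e c + 2) with hψdef
  have hψ_pos : ∀ c, 0 < ψ c := fun c => by positivity
  have hψ_lt : ∀ c, ψ c < 1 := fun c => by
    rw [hψdef]
    rw [div_lt_one (by positivity)]
    have : (0:ℝ) ≤ e c := Nat.cast_nonneg _
    linarith
  have hψ_inj : Function.Injective ψ := by
    intro a b hab
    apply he
    have ha : ((e a : ℝ) + 2) ≠ 0 := by positivity
    have hb : ((e b : ℝ) + 2) ≠ 0 := by positivity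
    rw [hψdef] at hab
    simp only at hab
    field_simp at hab
    exact_mod_cast add_right_cancel hab.symm
  -- anchors, cell indices, boxes, discretization maps
  set A : ℕ → (Fin k → ℤ) → (Fin k → ℝ) :=
    fun n c j => ((c j : ℝ) + if j = i0 then ψ c else 0) / (n + 1) with hAdef
  set Cdx : ℕ → (Fin k → ℝ) → (Fin k → ℤ) :=
    fun n x j => ⌊x j * (n + 1)⌋ with hCdef
  set Box : ℕ → Set (Fin k → ℝ) := fun n => {x | ∀ j, |x j| ≤ n} with hBoxdef
  set D : ℕ → (Fin k → ℝ) → (Fin k → ℝ) :=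
    fun n x => if x ∈ Box n then A n (Cdx n x) else 0 with hDdef
  -- node sets
  set I : ℕ → Set (Fin k → ℤ) :=
    fun n => Set.pi Set.univ (fun _ => Set.Icc (-(n * (n + 1) : ℤ)) (n * (n + 1))) with hIdef
  set F : ℕ → Set (Fin k → ℝ) := fun n => A n '' I n ∪ {0} with hFdef
  have hF_fin : ∀ n, (F n).Finite := fun n =>
    ((Set.Finite.pi fun _ => Set.finite_Icc _ _).image _).union (Set.finite_singleton _)
  -- D n x always lands in the node set F n
  have hrange : ∀ n x, D n x ∈ F n := by
    intro n x
    rw [hDdef]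
    by_cases hx : x ∈ Box n
    · simp only [if_pos hx]
      left
      refine ⟨Cdx n x, ?_, rfl⟩
      intro j _
      have hxj : |x j| ≤ n := hx j
      have h1 : -(n : ℝ) ≤ x j := by
        have := abs_le.mp hxj; exact this.1
      have h2 : x j ≤ n := (abs_le.mp hxj).2
      constructor
      · rw [hCdef]
        apply Int.le_floor.mpr
        push_cast
        nlinarith [Nat.cast_nonneg (α := ℝ) n]
      · rw [hCdef]
        have hle : (x j * (n + 1) : ℝ) ≤ (((n * (n + 1) : ℤ)) : ℝ) := by
          push_cast
          nlinarith [Nat.cast_nonneg (α := ℝ) n]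
        exact (Int.floor_le_floor hle).trans_eq (Int.floor_intCast _)
    · simp only [if_neg hx]
      right; rfl
  -- first coordinates of distinct nodes are distinct
  have hA_i0 : ∀ n c, A n c i0 = ((c i0 : ℝ) + ψ c) / (n + 1) := by
    intro n c; rw [hAdef]; simp
  have hkey : ∀ c c' : Fin k → ℤ, (c i0 : ℝ) + ψ c = (c' i0 : ℝ) + ψ c' → c = c' := by
    intro c c' h
    have hfl : ∀ d : Fin k → ℤ, ⌊(d i0 : ℝ) + ψ d⌋ = d i0 := by
      intro d
      rw [Int.floor_intCast_add]
      have : ⌊ψ d⌋ = 0 := Int.floor_eq_zero_iff.mpr ⟨(hψ_pos d).le, hψ_lt d⟩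
      omega
    have h0 : c i0 = c' i0 := by rw [← hfl c, ← hfl c', h]
    apply hψ_inj
    have : (c i0 : ℝ) = (c' i0 : ℝ) := by exact_mod_cast h0
    linarith
  have hA_ne : ∀ n c, A n c i0 ≠ 0 := by
    intro n c h
    rw [hA_i0] at h
    have hn1 : ((n : ℝ) + 1) ≠ 0 := by positivity
    rw [div_eq_zero_iff] at h
    rcases h with h | h
    · -- (c i0 : ℝ) + ψ c = 0, so ψ c = -(c i0) is an integer in (0,1)
      have h1 : ψ c = ((-(c i0) : ℤ) : ℝ) := by push_cast; linarith
      have h2 : (0:ℝ) < ((-(c i0) : ℤ) : ℝ) := h1 ▸ hψ_pos c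
      have h3 : ((-(c i0) : ℤ) : ℝ) < 1 := h1 ▸ hψ_lt c
      have h2' : (0:ℤ) < -(c i0) := by exact_mod_cast h2
      have h3' : -(c i0) < 1 := by exact_mod_cast h3
      omega
    · exact hn1 h
  have hinj : ∀ n, Set.InjOn (fun z => z i0) (F n) := by
    intro n z hz w hw hzw
    simp only at hzw
    rw [hFdef] at hz hw
    rcases hz with ⟨c, _, rfl⟩ | hz
    · rcases hw with ⟨c', _, rfl⟩ | hw
      · have : ((c i0 : ℝ) + ψ c) / (n + 1) = ((c' i0 : ℝ) + ψ c') / (n + 1) := by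
          rw [← hA_i0, ← hA_i0]; exact hzw
        have hn1 : ((n : ℝ) + 1) ≠ 0 := by positivity
        have h2 := mul_right_cancel₀ hn1 ((div_eq_div_iff hn1 hn1).mp this)
        rw [hkey c c' h2]
      · exfalso
        apply hA_ne n c
        rw [hzw]
        simp only [Set.mem_singleton_iff] at hw
        rw [hw]; rfl
    · rcases hw with ⟨c', _, rfl⟩ | hw
      · exfalso
        apply hA_ne n c'
        rw [← hzw]
        simp only [Set.mem_singleton_iff] at hz
        rw [hz]; rfl
      · simp only [Set.mem_singleton_iff] at hz hw
        rw [hz, hw]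
    -- measurability of the discretization maps
  have hBox_meas : ∀ n, MeasurableSet (Box n) := by
    intro n
    have : Box n = ⋂ j, {x : Fin k → ℝ | |x j| ≤ (n:ℝ)} := by
      ext x; simp [hBoxdef]
    rw [this]
    exact MeasurableSet.iInter fun j =>
      measurableSet_le ((measurable_pi_apply j).abs) measurable_const
  have hC_meas : ∀ n, Measurable (Cdx n) := by
    intro n
    apply measurable_pi_lambda
    intro j
    exact Int.measurable_floor.comp ((measurable_pi_apply j).mul measurable_const)
  have hD_meas : ∀ n, Measurable (D n) := by
    intro n
    rw [hDdef]
    exact Measurable.ite (hBox_meas n) ((measurable_of_countable (A n)).comp (hC_meas n))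
      measurable_const
  -- pointwise convergence of the discretization maps
  have htend : ∀ x : Fin k → ℝ, Tendsto (fun n => D n x) atTop (𝓝 x) := by
    intro x
    rw [tendsto_pi_nhds]
    intro j
    obtain ⟨M, hM⟩ := exists_nat_ge ‖x‖
    have hbound : ∀ n : ℕ, M ≤ n → dist (D n x j) (x j) ≤ 2 / (n + 1) := by
      intro n hn
      have hxB : x ∈ Box n := by
        intro j'
        calc |x j'| ≤ ‖x‖ := by
              simpa using norm_le_pi_norm x j'
        _ ≤ M := hM
        _ ≤ n := by exact_mod_cast hn
      have hDx : D n x j = ((⌊x j * (n+1)⌋ : ℝ) + if j = i0 then ψ (Cdx n x) else 0) / (n+1) := by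
        simp only [hDdef, hAdef, hCdef, if_pos hxB]
      have hn1 : (0:ℝ) < (n:ℝ) + 1 := by positivity
      rw [Real.dist_eq, hDx]
      have hfl1 : x j * (n+1) - 1 < (⌊x j * (n+1)⌋ : ℝ) := Int.sub_one_lt_floor _
      have hfl2 : ((⌊x j * (n+1)⌋ : ℝ)) ≤ x j * (n+1) := Int.floor_le _
      have hψ' : (0:ℝ) ≤ (if j = i0 then ψ (Cdx n x) else 0) ∧
          (if j = i0 then ψ (Cdx n x) else 0) ≤ 1 := by
        split
        · exact ⟨(hψ_pos _).le, (hψ_lt _).le⟩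
        · exact ⟨le_refl 0, zero_le_one⟩
      rw [abs_le]
      constructor
      · rw [div_sub' hn1.ne', le_div_iff₀ hn1, neg_mul, div_mul_cancel₀ _ hn1.ne']
        nlinarith [hψ'.1]
      · rw [div_sub' hn1.ne', div_le_iff₀ hn1, div_mul_cancel₀ _ hn1.ne']
        nlinarith [hψ'.2]
    rw [tendsto_iff_dist_tendsto_zero]
    apply squeeze_zero' (Eventually.of_forall fun n => dist_nonneg)
      (eventually_atTop.mpr ⟨M, hbound⟩)
    have h2 : Tendsto (fun n : ℕ => 2 * (1 / ((n:ℝ) + 1))) atTop (𝓝 (2 * 0)) :=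
      tendsto_one_div_add_atTop_nhds_zero_nat.const_mul 2
    simpa [mul_one_div, div_eq_mul_inv] using h2
  -- it suffices to show that the preimage of `closure S` has empty interior
  have hmain : interior ((firstMarginal hk0) ⁻¹' (closure S)) = ∅ := by
    by_contra hne
    obtain ⟨μ, hμ⟩ := Set.nonempty_iff_ne_empty.mpr hne
    -- the discretized measures converge weakly to μ
    have hmeas_tend : Tendsto (fun n => μ.map (hD_meas n).aemeasurable) atTop (𝓝 μ) := by
      rw [ProbabilityMeasure.tendsto_iff_forall_integral_tendsto]
      intro g
      have heq : ∀ n, ∫ x, g x ∂(μ.map (hD_meas n).aemeasurable : Measure (Fin k → ℝ))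
          = ∫ x, g (D n x) ∂(μ : Measure (Fin k → ℝ)) := by
        intro n
        rw [ProbabilityMeasure.toMeasure_map]
        exact integral_map (hD_meas n).aemeasurable g.continuous.aestronglyMeasurable
      simp only [heq]
      apply tendsto_integral_of_dominated_convergence (fun _ => ‖g‖)
      · exact fun n => (g.continuous.measurable.comp (hD_meas n)).aestronglyMeasurable
      · exact integrable_const _
      · exact fun n => Eventually.of_forall fun x => g.norm_coe_le_norm _
      · exact Eventually.of_forall fun x => (g.continuous.tendsto x).comp (htend x)
    have hWo : IsOpen (interior ((firstMarginal hk0) ⁻¹' (closure S))) := isOpen_interior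
    obtain ⟨n, hn⟩ := (hmeas_tend.eventually_mem (hWo.mem_nhds hμ)).exists
    -- build the continuous section through the nodes of step n
    obtain ⟨s, hs_cont, hs_sec, hs_node⟩ := exists_interp_section i0 (F n) (hF_fin n) (hinj n)
    set G : ProbabilityMeasure ℝ → ProbabilityMeasure (Fin k → ℝ) :=
      fun ρ => ρ.map (f := s) hs_cont.measurable.aemeasurable with hGdef
    have hG_cont : Continuous G := ProbabilityMeasure.continuous_map hs_cont
    set r : (Fin k → ℝ) → ℝ := fun x => D n x i0 with hrdef
    have hr_meas : Measurable r := (measurable_pi_apply i0).comp (hD_meas n)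
    set ρ0 := μ.map hr_meas.aemeasurable with hρ0def
    have hsr : s ∘ r = D n := by
      funext x
      exact hs_node (D n x) (hrange n x)
    have hGρ0 : G ρ0 = μ.map (hD_meas n).aemeasurable := by
      apply ProbabilityMeasure.toMeasure_injective
      simp only [hGdef, hρ0def, ProbabilityMeasure.toMeasure_map]
      rw [Measure.map_map hs_cont.measurable hr_meas, hsr]
    have hfG : ∀ ρ : ProbabilityMeasure ℝ, firstMarginal hk0 (G ρ) = ρ := by
      intro ρ
      apply ProbabilityMeasure.toMeasure_injective
      show Measure.map _ _ = _
      rw [ProbabilityMeasure.toMeasure_map,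
        Measure.map_map (measurable_pi_apply i0) hs_cont.measurable]
      have : (fun y : Fin k → ℝ => y i0) ∘ s = id := funext fun t => hs_sec t
      rw [this, Measure.map_id]
    -- the preimage of the interior under G is a nonempty open subset of closure S
    have hsub : G ⁻¹' (interior ((firstMarginal hk0) ⁻¹' (closure S))) ⊆ closure S := by
      intro ρ hρ
      have := interior_subset hρ
      rw [Set.mem_preimage] at this
      rw [← hfG ρ]
      exact this
    have hopen : IsOpen (G ⁻¹' (interior ((firstMarginal hk0) ⁻¹' (closure S)))) :=
      hWo.preimage hG_cont
    have hnonempty : ρ0 ∈ G ⁻¹' (interior ((firstMarginal hk0) ⁻¹' (closure S))) := by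
      rw [Set.mem_preimage, hGρ0]
      exact hn
    have : ρ0 ∈ interior (closure S) := interior_maximal hsub hopen hnonempty
    rw [hS] at this
    exact this
  -- conclude
  rw [IsNowhereDense, ← Set.subset_empty_iff]
  calc interior (closure {μ : ProbabilityMeasure (Fin k → ℝ) |
        firstMarginal (by omega) μ ∈ S})
      ⊆ interior ((firstMarginal hk0) ⁻¹' (closure S)) := by
        apply interior_mono
        apply closure_minimal
        · intro μ hμ
          exact subset_closure hμ
        · exact (isClosed_closure).preimage hfm_cont
  _ ⊆ ∅ := by rw [hmain]
end

section
/- Let F be the distribution function of a Borel probability measure on R with infinite right endpoint x_F = infty, and suppose F belongs to the maximum domain of attraction D(G_0) of the Gumbel distribution. Define f(t) = (integral from t to infty of (1 - F(z)) dz) / (1 - F(t)) for t in R. Then the limit as t -> infty of (1 - F(t + f(t))) / (1 - F(t)) equals 1/e. -/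
open MeasureTheory Filter Topology Set NNReal

/-- The right endpoint `x_F = sup {x : F x < 1}` of a distribution, as an extended real. -/
noncomputable def rightEndpoint (μ : ProbabilityMeasure ℝ) : EReal :=
  sSup ((fun x : ℝ => (x : EReal)) '' {x : ℝ | distrib μ x < 1})


/-- Moving-point convergence for an antitone family converging to `exp (-·)`. -/
private lemma aux_L1 {h : ℕ → ℝ → ℝ} (hmono : ∀ j, Antitone (h j))
    (hlim : ∀ x : ℝ, Tendsto (fun j => h j x) atTop (𝓝 (Real.exp (-x))))
    {u : ℕ → ℝ} {L : ℝ} (hL : 0 < L)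
    (hu : Tendsto (fun j => h j (u j)) atTop (𝓝 L)) :
    Tendsto u atTop (𝓝 (-Real.log L)) := by
  set x0 : ℝ := -Real.log L with hx0
  have hLx : Real.exp (-x0) = L := by
    rw [hx0, neg_neg, Real.exp_log hL]
  rw [Metric.tendsto_atTop]
  intro ε hε
  -- upper bound: eventually u j < x0 + ε
  have h1 : Real.exp (-(x0 + ε)) < L := by
    rw [← hLx]
    exact Real.exp_lt_exp.2 (by linarith)
  have h2 : L < Real.exp (-(x0 - ε)) := by
    rw [← hLx]
    exact Real.exp_lt_exp.2 (by linarith)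
  set c1 : ℝ := (Real.exp (-(x0 + ε)) + L) / 2
  set c2 : ℝ := (L + Real.exp (-(x0 - ε))) / 2
  have e1 : ∀ᶠ j in atTop, h j (x0 + ε) < c1 :=
    (hlim (x0 + ε)).eventually_lt_const (by simp only [c1]; linarith)
  have e2 : ∀ᶠ j in atTop, c1 < h j (u j) :=
    hu.eventually_const_lt (by simp only [c1]; linarith)
  have e3 : ∀ᶠ j in atTop, h j (u j) < c2 :=
    hu.eventually_lt_const (by simp only [c2]; linarith)
  have e4 : ∀ᶠ j in atTop, c2 < h j (x0 - ε) :=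
    (hlim (x0 - ε)).eventually_const_lt (by simp only [c2]; linarith)
  obtain ⟨Nj, hNj⟩ := eventually_atTop.1 ((e1.and e2).and (e3.and e4))
  refine ⟨Nj, fun j hj => ?_⟩
  obtain ⟨⟨a1, a2⟩, a3, a4⟩ := hNj j hj
  have hub : u j < x0 + ε := by
    by_contra hcon
    push_neg at hcon
    exact absurd (hmono j hcon) (by linarith)
  have hlb : x0 - ε < u j := by
    by_contra hcon
    push_neg at hcon
    exact absurd (hmono j hcon) (by linarith)
  rw [Real.dist_eq, abs_sub_lt_iff]
  constructor <;> linarith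


/-- From `F_n ^ n → G ∈ (0,1)` with `0 ≤ F_n < 1`, deduce `n * (1 - F_n) → -log G`. -/
private lemma aux_pow_to_lin {F : ℕ → ℝ} (hF0 : ∀ n, 0 ≤ F n) (hF1 : ∀ n, F n < 1)
    {G : ℝ} (hG0 : 0 < G) (hG1 : G < 1)
    (hconv : Tendsto (fun n : ℕ => F n ^ n) atTop (𝓝 G)) :
    Tendsto (fun n : ℕ => (n : ℝ) * (1 - F n)) atTop (𝓝 (-Real.log G)) := by
  -- Step 1: F n → 1
  have hFto1 : Tendsto F atTop (𝓝 1) := by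
    have hlow : ∀ᶠ n : ℕ in atTop, (G / 2) ^ ((n : ℝ)⁻¹) ≤ F n := by
      have hev : ∀ᶠ n : ℕ in atTop, G / 2 < F n ^ n :=
        hconv.eventually_const_lt (by linarith)
      filter_upwards [hev, eventually_gt_atTop 0] with n hn hn0
      calc (G / 2) ^ ((n : ℝ)⁻¹) ≤ (F n ^ n) ^ ((n : ℝ)⁻¹) :=
            Real.rpow_le_rpow (by linarith) hn.le (by positivity)
        _ = F n := by
          rw [← Real.rpow_natCast (F n) n, ← Real.rpow_mul (hF0 n),
            mul_inv_cancel₀ (by exact_mod_cast hn0.ne'), Real.rpow_one]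
    have hlim : Tendsto (fun n : ℕ => (G / 2) ^ ((n : ℝ)⁻¹)) atTop (𝓝 1) := by
      have h0 : Tendsto (fun n : ℕ => (n : ℝ)⁻¹ * Real.log (G / 2)) atTop (𝓝 0) := by
        simpa using ((tendsto_inv_atTop_nhds_zero_nat (𝕜 := ℝ)).mul_const (Real.log (G / 2)))
      have h2 := (Real.continuous_exp.tendsto 0).comp h0
      simp only [Function.comp_def, Real.exp_zero] at h2
      refine h2.congr fun n => ?_
      rw [Real.rpow_def_of_pos (by linarith), mul_comm]
    exact tendsto_of_tendsto_of_tendsto_of_le_of_le' hlim tendsto_const_nhds hlow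
      (Eventually.of_forall fun n => (hF1 n).le)
  -- Step 2: n * log (F n) → log G
  have hlog : Tendsto (fun n : ℕ => (n : ℝ) * Real.log (F n)) atTop (𝓝 (Real.log G)) := by
    have h5 := (Real.continuousAt_log hG0.ne').tendsto.comp hconv
    simp only [Function.comp_def] at h5
    refine h5.congr fun n => ?_
    rw [Real.log_pow]
  -- Step 3: ratio (-log (F n)) / (1 - F n) → 1
  have hSto0 : Tendsto (fun n => 1 - F n) atTop (𝓝 0) := by
    simpa using (tendsto_const_nhds (x := (1:ℝ))).sub hFto1
  have hslope : Tendsto (fun s : ℝ => -Real.log (1 - s) / s) (𝓝[≠] 0) (𝓝 1) := by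
    have hd : HasDerivAt (fun s : ℝ => -Real.log (1 - s)) 1 0 := by
      have h1 : HasDerivAt (fun s : ℝ => (1 : ℝ) - s) (-1) 0 := by
        simpa using (hasDerivAt_id (0:ℝ)).const_sub 1
      have h2 := (Real.hasDerivAt_log (by norm_num : (1:ℝ) - 0 ≠ 0)).comp 0 h1
      have h3 := h2.neg
      norm_num at h3
      exact h3
    rw [hasDerivAt_iff_tendsto_slope] at hd
    refine hd.congr fun s => ?_
    simp [slope_def_field]
  have hSne : Tendsto (fun n => 1 - F n) atTop (𝓝[≠] 0) := by
    refine tendsto_nhdsWithin_of_tendsto_nhds_of_eventually_within _ hSto0 ?_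
    exact Eventually.of_forall fun n => sub_ne_zero_of_ne (hF1 n).ne'
  have hratio : Tendsto (fun n => -Real.log (1 - (1 - F n)) / (1 - F n)) atTop (𝓝 1) :=
    hslope.comp hSne
  simp only [sub_sub_cancel] at hratio
  -- Step 4: combine
  have hprod : Tendsto (fun n : ℕ =>
      ((n : ℝ) * Real.log (F n)) * (-(-Real.log (F n) / (1 - F n))⁻¹)) atTop
      (𝓝 (Real.log G * (-(1:ℝ)⁻¹))) := by
    exact hlog.mul ((hratio.inv₀ (by norm_num)).neg)
  have : Real.log G * (-(1:ℝ)⁻¹) = -Real.log G := by ring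
  rw [this] at hprod
  refine hprod.congr' ?_
  have hpos : ∀ᶠ n : ℕ in atTop, 0 < F n := hFto1.eventually_const_lt (by norm_num)
  filter_upwards [hpos] with n hn
  have hlogneg : Real.log (F n) < 0 := Real.log_neg hn (hF1 n)
  have hSn : 0 < 1 - F n := by linarith [hF1 n]
  have key : (-(-Real.log (F n) / (1 - F n))⁻¹) = (1 - F n) * (Real.log (F n))⁻¹ := by
    rw [neg_div, inv_neg, neg_neg, inv_div, div_eq_mul_inv]
  rw [key, mul_assoc, mul_comm (1 - F n), ← mul_assoc, mul_assoc (↑n : ℝ),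
    ← mul_assoc (Real.log (F n)), mul_inv_cancel₀ hlogneg.ne, one_mul]

/-- Generalized Khinchin convergence-of-types lemma. -/
private lemma aux_GK {S : ℝ → ℝ} {a b : ℕ → ℝ} (hA : Antitone S)
    (ha : ∀ n, 0 < a n)
    (hS : ∀ x : ℝ, Tendsto (fun n : ℕ => (n : ℝ) * S (a n * x + b n)) atTop
      (𝓝 (Real.exp (-x))))
    {n m : ℕ → ℕ} (hn : Tendsto n atTop atTop) (hm : Tendsto m atTop atTop)
    {lam : ℝ} (hlam : 0 < lam)
    (hrat : Tendsto (fun j => (n j : ℝ) / (m j : ℝ)) atTop (𝓝 lam)) :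
    Tendsto (fun j => a (m j) / a (n j)) atTop (𝓝 1) := by
  set h : ℕ → ℝ → ℝ := fun j x => (n j : ℝ) * S (a (n j) * x + b (n j)) with hh
  have hmono : ∀ j, Antitone (h j) := by
    intro j x y hxy
    exact mul_le_mul_of_nonneg_left
      (hA (add_le_add_left (mul_le_mul_of_nonneg_left hxy (ha (n j)).le) _))
      (Nat.cast_nonneg _)
  have hlim : ∀ x : ℝ, Tendsto (fun j => h j x) atTop (𝓝 (Real.exp (-x))) :=
    fun x => (hS x).comp hn
  -- general convergence along the m-grid, transported to the n-normalization
  have key : ∀ x : ℝ, Tendsto (fun j => h j ((a (m j) * x + b (m j) - b (n j)) / a (n j)))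
      atTop (𝓝 (lam * Real.exp (-x))) := by
    intro x
    have h1 : Tendsto (fun j => ((n j : ℝ) / (m j : ℝ)) *
        ((m j : ℝ) * S (a (m j) * x + b (m j)))) atTop (𝓝 (lam * Real.exp (-x))) :=
      hrat.mul ((hS x).comp hm)
    refine h1.congr' ?_
    filter_upwards [hm.eventually (eventually_gt_atTop 0)] with j hj
    have hmne : ((m j : ℝ)) ≠ 0 := by exact_mod_cast hj.ne'
    have harg : a (n j) * ((a (m j) * x + b (m j) - b (n j)) / a (n j)) + b (n j)
        = a (m j) * x + b (m j) := by
      rw [mul_comm (a (n j)), div_mul_cancel₀ _ (ha (n j)).ne']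
      ring
    rw [hh]
    simp only
    rw [harg]
    field_simp
  have k0 := key 0
  simp only [mul_zero, zero_add, neg_zero, Real.exp_zero, mul_one] at k0
  have h1 := aux_L1 hmono hlim hlam k0
  have hlam2 : 0 < lam * Real.exp (-1) := by positivity
  have k1 := key 1
  simp only [mul_one] at k1
  have h2 := aux_L1 hmono hlim hlam2 k1
  have hlog2 : -Real.log (lam * Real.exp (-1)) = -Real.log lam + 1 := by
    rw [Real.log_mul hlam.ne' (Real.exp_ne_zero _), Real.log_exp]
    ring
  rw [hlog2] at h2
  have h3 := h2.sub h1
  have : (-Real.log lam + 1) - (-Real.log lam) = 1 := by ring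
  rw [this] at h3
  refine h3.congr fun j => ?_
  have hane : a (n j) ≠ 0 := (ha (n j)).ne'
  rw [div_sub_div_same]
  congr 1
  ring


private lemma aux_nat_succ_div : Tendsto (fun n : ℕ => ((n : ℝ) + 1) / (n : ℝ)) atTop (𝓝 1) := by
  have h : Tendsto (fun n : ℕ => 1 + (n : ℝ)⁻¹) atTop (𝓝 (1 + 0)) :=
    tendsto_const_nhds.add tendsto_inv_atTop_nhds_zero_nat
  rw [add_zero] at h
  refine h.congr' ?_
  filter_upwards [eventually_ge_atTop 1] with n hn
  have : (n : ℝ) ≠ 0 := by positivity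
  field_simp

private lemma aux_step6 {S : ℝ → ℝ} {a b : ℕ → ℝ} {N : ℝ → ℕ}
    (hA : Antitone S) (hpos : ∀ t, 0 < S t) (ha : ∀ n, 0 < a n)
    (hS : ∀ x : ℝ, Tendsto (fun n : ℕ => (n : ℝ) * S (a n * x + b n)) atTop
      (𝓝 (Real.exp (-x))))
    (hNle : ∀ᶠ t : ℝ in atTop, b (N t) ≤ t)
    (hNlt : ∀ᶠ t : ℝ in atTop, t < b (N t + 1))
    (hN : Tendsto N atTop atTop)
    (halpha : Tendsto (fun n : ℕ => a n / a (n + 1)) atTop (𝓝 1)) (x : ℝ) :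
    Tendsto (fun t : ℝ => S (t + x * a (N t)) / S t) atTop (𝓝 (Real.exp (-x))) := by
  have hN1 : Tendsto (fun t : ℝ => N t + 1) atTop atTop :=
    (tendsto_add_atTop_nat 1).comp hN
  have hNpos : ∀ᶠ t : ℝ in atTop, 1 ≤ N t := hN.eventually (eventually_ge_atTop 1)
  -- the four grid limits
  have hAup : Tendsto (fun t : ℝ => (N t : ℝ) * S (a (N t) * x + b (N t))) atTop
      (𝓝 (Real.exp (-x))) := (hS x).comp hN
  have hBup : Tendsto (fun t : ℝ => ((N t + 1 : ℕ) : ℝ) * S (b (N t + 1))) atTop (𝓝 1) := by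
    have := (hS 0).comp hN1
    simp only [mul_zero, zero_add, neg_zero, Real.exp_zero] at this
    exact this
  have hBdn : Tendsto (fun t : ℝ => (N t : ℝ) * S (b (N t))) atTop (𝓝 1) := by
    have := (hS 0).comp hN
    simp only [mul_zero, zero_add, neg_zero, Real.exp_zero] at this
    exact this
  have hquot : Tendsto (fun t : ℝ => ((N t : ℝ) + 1) / (N t : ℝ)) atTop (𝓝 1) :=
    aux_nat_succ_div.comp hN
  rw [Metric.tendsto_nhds]
  intro ε hε
  set δ : ℝ := ε / (2 * (Real.exp (-x) + 1)) with hδ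
  have hδpos : 0 < δ := by positivity
  set x' : ℝ := x + δ with hx'
  have hxx' : Real.exp (-x) - Real.exp (-x') ≤ ε / 2 := by
    have h1 : Real.exp (-x) - Real.exp (-x') = Real.exp (-x) * (1 - Real.exp (-δ)) := by
      rw [hx', neg_add, Real.exp_add]
      ring
    have h2 : 1 - Real.exp (-δ) ≤ δ := by
      have := Real.add_one_le_exp (-δ)
      linarith
    have h3 : Real.exp (-x) * (1 - Real.exp (-δ)) ≤ Real.exp (-x) * δ :=
      mul_le_mul_of_nonneg_left h2 (Real.exp_pos _).le
    have h4 : Real.exp (-x) * δ ≤ ε / 2 := by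
      rw [hδ, mul_div_assoc', div_le_div_iff₀ (by positivity) (by norm_num : (0:ℝ) < 2)]
      nlinarith [Real.exp_pos (-x), hε]
    linarith
  have hAdn : Tendsto (fun t : ℝ => ((N t + 1 : ℕ) : ℝ) * S (a (N t + 1) * x' + b (N t + 1)))
      atTop (𝓝 (Real.exp (-x'))) := (hS x').comp hN1
  -- upper bound quantity
  have hQup : Tendsto (fun t : ℝ => S (a (N t) * x + b (N t)) / S (b (N t + 1))) atTop
      (𝓝 (Real.exp (-x))) := by
    have h1 : Tendsto (fun t : ℝ =>
        ((N t : ℝ) * S (a (N t) * x + b (N t))) / (((N t + 1 : ℕ) : ℝ) * S (b (N t + 1)))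
          * (((N t : ℝ) + 1) / (N t : ℝ))) atTop (𝓝 (Real.exp (-x) / 1 * 1)) :=
      (hAup.div hBup one_ne_zero).mul hquot
    rw [div_one, mul_one] at h1
    refine h1.congr' ?_
    filter_upwards [hNpos] with t ht
    have hne : (N t : ℝ) ≠ 0 := by positivity
    have hne2 : S (b (N t + 1)) ≠ 0 := (hpos _).ne'
    push_cast
    field_simp
  -- lower bound quantity
  have hQdn : Tendsto (fun t : ℝ => S (a (N t + 1) * x' + b (N t + 1)) / S (b (N t))) atTop
      (𝓝 (Real.exp (-x'))) := by
    have h1 : Tendsto (fun t : ℝ =>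
        (((N t + 1 : ℕ) : ℝ) * S (a (N t + 1) * x' + b (N t + 1))) /
          ((N t : ℝ) * S (b (N t))) * ((N t : ℝ) / ((N t : ℝ) + 1))) atTop
        (𝓝 (Real.exp (-x') / 1 * 1)) := by
      have hq2 : Tendsto (fun t : ℝ => (N t : ℝ) / ((N t : ℝ) + 1)) atTop (𝓝 1) := by
        have := hquot.inv₀ one_ne_zero
        simp only [inv_one] at this
        exact this.congr fun t => by rw [inv_div]
      exact (hAdn.div hBdn one_ne_zero).mul hq2
    rw [div_one, mul_one] at h1
    refine h1.congr' ?_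
    filter_upwards [hNpos] with t ht
    have hne : (N t : ℝ) ≠ 0 := by positivity
    have hne2 : S (b (N t)) ≠ 0 := (hpos _).ne'
    have hne3 : ((N t : ℝ) + 1) ≠ 0 := by positivity
    push_cast
    field_simp
  -- eventual comparison of a (N t) and a (N t + 1)
  have hax : ∀ᶠ t : ℝ in atTop, x * a (N t) ≤ x' * a (N t + 1) := by
    have h1 : Tendsto (fun t : ℝ => x * (a (N t) / a (N t + 1))) atTop (𝓝 x) := by
      have := (halpha.comp hN).const_mul x
      simpa using this
    have h2 : ∀ᶠ t : ℝ in atTop, x * (a (N t) / a (N t + 1)) < x' :=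
      h1.eventually_lt_const (by rw [hx']; linarith)
    filter_upwards [h2] with t ht
    have hpa : 0 < a (N t + 1) := ha _
    calc x * a (N t) = x * (a (N t) / a (N t + 1)) * a (N t + 1) := by field_simp
      _ ≤ x' * a (N t + 1) := mul_le_mul_of_nonneg_right ht.le hpa.le
  -- combine
  have hev1 : ∀ᶠ t : ℝ in atTop,
      S (a (N t) * x + b (N t)) / S (b (N t + 1)) < Real.exp (-x) + ε :=
    hQup.eventually_lt_const (by linarith)
  have hev2 : ∀ᶠ t : ℝ in atTop,
      Real.exp (-x') - ε / 2 < S (a (N t + 1) * x' + b (N t + 1)) / S (b (N t)) :=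
    hQdn.eventually_const_lt (by linarith [Real.exp_pos (-x')])
  filter_upwards [hNle, hNlt, hax, hev1, hev2] with t h1 h2 h3 h4 h5
  have hub : S (t + x * a (N t)) / S t ≤ S (a (N t) * x + b (N t)) / S (b (N t + 1)) := by
    have hn1 : S (t + x * a (N t)) ≤ S (a (N t) * x + b (N t)) := by
      apply hA
      rw [mul_comm]
      linarith
    have hd1 : S (b (N t + 1)) ≤ S t := hA h2.le
    exact div_le_div₀ (hpos _).le hn1 (hpos _) hd1
  have hlb : S (a (N t + 1) * x' + b (N t + 1)) / S (b (N t)) ≤ S (t + x * a (N t)) / S t := by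
    have hn1 : S (a (N t + 1) * x' + b (N t + 1)) ≤ S (t + x * a (N t)) := by
      apply hA
      rw [mul_comm (a (N t + 1))]
      linarith
    have hd1 : S t ≤ S (b (N t)) := hA h1
    exact div_le_div₀ (hpos _).le hn1 (hpos _) hd1
  rw [Real.dist_eq, abs_sub_lt_iff]
  constructor
  · linarith
  · linarith

private lemma aux_NS {S : ℝ → ℝ} {a b : ℕ → ℝ} {N : ℝ → ℕ}
    (hA : Antitone S) (hpos : ∀ t, 0 < S t)
    (hS : ∀ x : ℝ, Tendsto (fun n : ℕ => (n : ℝ) * S (a n * x + b n)) atTop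
      (𝓝 (Real.exp (-x))))
    (hNle : ∀ᶠ t : ℝ in atTop, b (N t) ≤ t)
    (hNlt : ∀ᶠ t : ℝ in atTop, t < b (N t + 1))
    (hN : Tendsto N atTop atTop) :
    Tendsto (fun t : ℝ => (N t : ℝ) * S t) atTop (𝓝 1) := by
  have hN1 : Tendsto (fun t : ℝ => N t + 1) atTop atTop :=
    (tendsto_add_atTop_nat 1).comp hN
  have hBup : Tendsto (fun t : ℝ => ((N t + 1 : ℕ) : ℝ) * S (b (N t + 1))) atTop (𝓝 1) := by
    have := (hS 0).comp hN1
    simp only [mul_zero, zero_add, neg_zero, Real.exp_zero] at this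
    exact this
  have hBdn : Tendsto (fun t : ℝ => (N t : ℝ) * S (b (N t))) atTop (𝓝 1) := by
    have := (hS 0).comp hN
    simp only [mul_zero, zero_add, neg_zero, Real.exp_zero] at this
    exact this
  have hlow : Tendsto (fun t : ℝ => ((N t : ℝ) / ((N t : ℝ) + 1)) *
      (((N t + 1 : ℕ) : ℝ) * S (b (N t + 1)))) atTop (𝓝 1) := by
    have hq0 : Tendsto (fun t : ℝ => ((N t : ℝ) + 1) / (N t : ℝ)) atTop (𝓝 1) :=
      aux_nat_succ_div.comp hN
    have hq2 : Tendsto (fun t : ℝ => (N t : ℝ) / ((N t : ℝ) + 1)) atTop (𝓝 1) := by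
      have := hq0.inv₀ one_ne_zero
      simp only [inv_one] at this
      exact this.congr fun t => by rw [inv_div]
    simpa using hq2.mul hBup
  refine tendsto_of_tendsto_of_tendsto_of_le_of_le' hlow hBdn ?_ ?_
  · filter_upwards [hNlt] with t ht
    have h1 : S (b (N t + 1)) ≤ S t := hA ht.le
    have hNne : ((N t : ℝ) + 1) ≠ 0 := by positivity
    calc (N t : ℝ) / ((N t : ℝ) + 1) * (((N t + 1 : ℕ) : ℝ) * S (b (N t + 1)))
        = (N t : ℝ) * S (b (N t + 1)) := by push_cast; field_simp
      _ ≤ (N t : ℝ) * S t := mul_le_mul_of_nonneg_left h1 (Nat.cast_nonneg _)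
  · filter_upwards [hNle] with t ht
    exact mul_le_mul_of_nonneg_left (hA ht) (Nat.cast_nonneg _)

private lemma aux_step7 {S : ℝ → ℝ} {a b : ℕ → ℝ} {N : ℝ → ℕ}
    (hA : Antitone S) (hpos : ∀ t, 0 < S t) (ha : ∀ n, 0 < a n)
    (hS : ∀ x : ℝ, Tendsto (fun n : ℕ => (n : ℝ) * S (a n * x + b n)) atTop
      (𝓝 (Real.exp (-x))))
    (hNle : ∀ᶠ t : ℝ in atTop, b (N t) ≤ t)
    (hNlt : ∀ᶠ t : ℝ in atTop, t < b (N t + 1))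
    (hN : Tendsto N atTop atTop)
    (halpha : Tendsto (fun n : ℕ => a n / a (n + 1)) atTop (𝓝 1)) :
    Tendsto (fun t : ℝ => a (N (t + a (N t))) / a (N t)) atTop (𝓝 1) := by
  have hNS := aux_NS hA hpos hS hNle hNlt hN
  have h6 := aux_step6 hA hpos ha hS hNle hNlt hN halpha 1
  simp only [one_mul] at h6
  rw [tendsto_iff_seq_tendsto]
  intro ts hts
  set u : ℕ → ℝ := fun j => ts j + a (N (ts j)) with hu
  have hts2 : Tendsto u atTop atTop :=
    tendsto_atTop_mono (fun j => le_add_of_nonneg_right (ha _).le) hts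
  have hn : Tendsto (fun j => N (ts j)) atTop atTop := hN.comp hts
  have hm : Tendsto (fun j => N (u j)) atTop atTop := hN.comp hts2
  have hrat : Tendsto (fun j => ((N (ts j) : ℝ)) / ((N (u j) : ℝ))) atTop
      (𝓝 (Real.exp (-1))) := by
    have h1 : Tendsto (fun j => ((N (ts j) : ℝ) * S (ts j)) / ((N (u j) : ℝ) * S (u j)) *
        (S (u j) / S (ts j))) atTop (𝓝 (1 / 1 * Real.exp (-1))) :=
      ((hNS.comp hts).div (hNS.comp hts2) one_ne_zero).mul (h6.comp hts)
    rw [div_one, one_mul] at h1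
    refine h1.congr' ?_
    filter_upwards [hm.eventually (eventually_ge_atTop 1)] with j hj
    have h2 : ((N (u j) : ℝ)) ≠ 0 := by positivity
    have h3 : S (ts j) ≠ 0 := (hpos _).ne'
    have h4 : S (u j) ≠ 0 := (hpos _).ne'
    field_simp
  have := aux_GK hA ha hS hn hm (Real.exp_pos (-1)) hrat
  exact this


private lemma aux_step8 {S : ℝ → ℝ} {g : ℝ → ℝ}
    (hA : Antitone S) (hpos : ∀ t, 0 < S t) (hg : ∀ t, 0 < g t)
    (hhalf : ∀ᶠ t : ℝ in atTop, S (t + g t) ≤ (1 / 2) * S t)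
    (hself : ∀ᶠ t : ℝ in atTop, g (t + g t) ≤ (11 / 10) * g t) :
    ∃ T : ℝ, ∀ t ≥ T, ∀ v ≥ (0 : ℝ), S (t + v * g t) ≤ 800 / (max v 20) ^ 2 * S t := by
  obtain ⟨T₁, hT₁⟩ := eventually_atTop.1 hhalf
  obtain ⟨T₂, hT₂⟩ := eventually_atTop.1 hself
  refine ⟨max T₁ T₂, fun t ht v hv => ?_⟩
  set s : ℕ → ℝ := fun k => (fun y => y + g y)^[k] t with hsdef
  have hs0 : s 0 = t := rfl
  have hsucc : ∀ k, s (k + 1) = s k + g (s k) := by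
    intro k
    rw [hsdef]
    simp only
    rw [Function.iterate_succ_apply']
  have hge : ∀ k, max T₁ T₂ ≤ s k := by
    intro k
    induction k with
    | zero => exact ht
    | succ k ih => rw [hsucc k]; nlinarith [hg (s k)]
  have hSs : ∀ k, S (s k) ≤ (1 / 2) ^ k * S t := by
    intro k
    induction k with
    | zero => simp [hs0]
    | succ k ih =>
      rw [hsucc k, pow_succ]
      calc S (s k + g (s k)) ≤ (1 / 2) * S (s k) :=
            hT₁ _ (le_trans (le_max_left _ _) (hge k))
        _ ≤ (1 / 2) * ((1 / 2) ^ k * S t) := by linarith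
        _ = (1 / 2) ^ k * (1 / 2) * S t := by ring
  have hgs : ∀ k, g (s k) ≤ (11 / 10) ^ k * g t := by
    intro k
    induction k with
    | zero => simp [hs0]
    | succ k ih =>
      rw [hsucc k, pow_succ]
      calc g (s k + g (s k)) ≤ (11 / 10) * g (s k) :=
            hT₂ _ (le_trans (le_max_right _ _) (hge k))
        _ ≤ (11 / 10) * ((11 / 10) ^ k * g t) := by nlinarith
        _ = (11 / 10) ^ k * (11 / 10) * g t := by ring
  have hub : ∀ k, s k ≤ t + 10 * g t * ((11 / 10) ^ k - 1) := by
    intro k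
    induction k with
    | zero => simp [hs0]
    | succ k ih =>
      rw [hsucc k, pow_succ]
      have := hgs k
      nlinarith [hg t]
  have hex : ∀ u : ℝ, ∃ k, u < s k := by
    intro u
    by_contra hcon
    push_neg at hcon
    obtain ⟨k, hk⟩ := exists_pow_lt_of_lt_one
      (div_pos (hpos u) (hpos t)) (by norm_num : (1 : ℝ) / 2 < 1)
    have h1 : S u ≤ S (s k) := hA (hcon k)
    have h2 : S (s k) ≤ (1 / 2) ^ k * S t := hSs k
    have h3 : (1 / 2 : ℝ) ^ k * S t < S u := by
      rw [lt_div_iff₀ (hpos t)] at hk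
      linarith
    linarith
  set u : ℝ := t + v * g t with hu
  have hut : t ≤ u := le_add_of_nonneg_right (mul_nonneg hv (hg t).le)
  set K : ℕ := Nat.find (hex u) with hKdef
  have hK : u < s K := Nat.find_spec (hex u)
  have hK0 : K ≠ 0 := by
    intro h0
    rw [h0] at hK
    rw [hs0] at hK
    linarith
  set k : ℕ := K - 1 with hkdef
  have hkK : k + 1 = K := Nat.succ_pred_eq_of_ne_zero hK0
  have hks : s k ≤ u := by
    by_contra hcon
    push_neg at hcon
    exact Nat.find_min (hex u) (by omega) hcon
  have hSu : S u ≤ (1 / 2) ^ k * S t := le_trans (hA hks) (hSs k)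
  have hvlt : v < 11 * (11 / 10) ^ k := by
    have h1 : u < s (k + 1) := by rw [hkK]; exact hK
    have h2 := hub (k + 1)
    rw [pow_succ] at h2
    have h3 : v * g t < 10 * g t * ((11 / 10) ^ k * (11 / 10) - 1) := by
      rw [hu] at h1
      linarith
    have h4 : v * g t < 11 * (11 / 10) ^ k * g t := by nlinarith [hg t, pow_pos (by norm_num : (0:ℝ) < 11/10) k]
    exact lt_of_mul_lt_mul_right h4 (hg t).le
  -- numeric conclusion
  have hMsq : (max v 20) ^ 2 ≤ 800 * 2 ^ k := by
    rcases le_total v 20 with hv20 | hv20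
    · rw [max_eq_right hv20]
      have : (1 : ℝ) ≤ 2 ^ k := one_le_pow₀ (by norm_num)
      nlinarith
    · rw [max_eq_left hv20]
      have h1 : v ^ 2 ≤ 121 * ((121 / 100) ^ k) := by
        have h0 : v ^ 2 ≤ (11 * (11 / 10) ^ k) ^ 2 :=
          pow_le_pow_left₀ (by linarith) hvlt.le 2
        have he : (11 * ((11:ℝ) / 10) ^ k) ^ 2 = 121 * (121 / 100) ^ k := by
          rw [mul_pow, ← pow_right_comm]
          norm_num
        linarith
      have h2 : (121 / 100 : ℝ) ^ k ≤ 2 ^ k :=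
        pow_le_pow_left₀ (by norm_num) (by norm_num) k
      nlinarith
  have hfin : (1 / 2 : ℝ) ^ k ≤ 800 / (max v 20) ^ 2 := by
    have hM2 : (0 : ℝ) < (max v 20) ^ 2 := by positivity
    rw [le_div_iff₀ hM2]
    have h1 : (1 / 2 : ℝ) ^ k * (max v 20) ^ 2 ≤ (1 / 2) ^ k * (800 * 2 ^ k) :=
      mul_le_mul_of_nonneg_left hMsq (by positivity)
    have h2 : (1 / 2 : ℝ) ^ k * (800 * 2 ^ k) = 800 := by
      rw [show (1 / 2 : ℝ) ^ k * (800 * 2 ^ k) = 800 * ((1 / 2) * 2) ^ k by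
        rw [mul_pow]; ring]
      norm_num
    linarith
  calc S u ≤ (1 / 2) ^ k * S t := hSu
    _ ≤ 800 / (max v 20) ^ 2 * S t := mul_le_mul_of_nonneg_right hfin (hpos t).le


private lemma aux_dbound_integrable :
    IntegrableOn (fun v : ℝ => 800 / (max v 20) ^ 2) (Ioi 0) := by
  have hcont : Continuous fun v : ℝ => 800 / (max v 20) ^ 2 := by
    apply continuous_const.div (by fun_prop)
    intro v
    have : (20 : ℝ) ≤ max v 20 := le_max_right _ _
    positivity
  have h1 : IntegrableOn (fun v : ℝ => 800 / (max v 20) ^ 2) (Ioc 0 20) := by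
    refine Integrable.mono' (integrable_const 2) hcont.aestronglyMeasurable ?_
    refine Eventually.of_forall fun v => ?_
    have h20 : (20 : ℝ) ≤ max v 20 := le_max_right _ _
    rw [Real.norm_eq_abs, abs_of_nonneg (by positivity)]
    rw [div_le_iff₀ (by positivity)]
    nlinarith
  have h2 : IntegrableOn (fun v : ℝ => 800 / (max v 20) ^ 2) (Ioi 20) := by
    have h3 : IntegrableOn (fun v : ℝ => 800 * v ^ (-2 : ℝ)) (Ioi 20) :=
      (integrableOn_Ioi_rpow_of_lt (by norm_num) (by norm_num : (0:ℝ) < 20)).const_mul 800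
    refine h3.congr_fun (fun v hv => ?_) measurableSet_Ioi
    have hv0 : (0 : ℝ) < v := lt_trans (by norm_num) hv
    rw [max_eq_left (le_of_lt hv)]
    beta_reduce
    rw [show ((-2 : ℝ)) = ((-2 : ℤ) : ℝ) by norm_num, Real.rpow_intCast, zpow_neg,
      div_eq_mul_inv, zpow_two, sq]
  have := h1.union h2
  rwa [Ioc_union_Ioi_eq_Ioi (by norm_num : (0:ℝ) ≤ 20)] at this

private lemma aux_translate {S : ℝ → ℝ} (hm : Measurable S) (t : ℝ) :
    ∫ z in Ioi t, S z = ∫ x in Ioi (0:ℝ), S (t + x) := by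
  have h1 : ∫ z in Ioi t, S z = ∫ z, (Ioi t).indicator S z :=
    (integral_indicator measurableSet_Ioi).symm
  have h2 : ∫ x in Ioi (0:ℝ), S (t + x) = ∫ x, (Ioi (0:ℝ)).indicator (fun x => S (t + x)) x :=
    (integral_indicator measurableSet_Ioi).symm
  rw [h1, h2]
  rw [← integral_add_right_eq_self (fun z => (Ioi t).indicator S z) t]
  congr 1
  funext x
  by_cases hx : 0 < x
  · rw [indicator_of_mem (by simpa using hx), indicator_of_mem (by simp [hx])]
    rw [add_comm]
  · rw [indicator_of_notMem (by simpa using hx), indicator_of_notMem (by simp [hx])]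

private lemma aux_step10 {S : ℝ → ℝ} {g : ℝ → ℝ}
    (hA : Antitone S) (hpos : ∀ t, 0 < S t) (hg : ∀ t, 0 < g t)
    (h6 : ∀ v : ℝ, Tendsto (fun t : ℝ => S (t + v * g t) / S t) atTop (𝓝 (Real.exp (-v))))
    (hdom : ∃ T : ℝ, ∀ t ≥ T, ∀ v ≥ (0:ℝ), S (t + v * g t) ≤ 800 / (max v 20) ^ 2 * S t) :
    Tendsto (fun t : ℝ => (∫ z in Ioi t, S z) / (S t * g t)) atTop (𝓝 1) := by
  obtain ⟨T, hT⟩ := hdom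
  have hmeas : Measurable S := hA.measurable
  -- the integrand family
  have hanti : ∀ t : ℝ, Antitone fun v : ℝ => S (t + v * g t) / S t := by
    intro t x y hxy
    have h1 : S (t + y * g t) ≤ S (t + x * g t) := hA (by nlinarith [hg t])
    exact div_le_div_of_nonneg_right h1 (hpos t).le
  have hid : ∀ t : ℝ, (∫ z in Ioi t, S z) / (S t * g t)
      = ∫ v in Ioi (0:ℝ), S (t + v * g t) / S t := by
    intro t
    have hcv : (∫ v in Ioi (0:ℝ), S (t + v * g t))
        = (g t)⁻¹ • ∫ x in Ioi ((0:ℝ) * g t), S (t + x) :=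
      integral_comp_mul_right_Ioi (fun u => S (t + u)) 0 (hg t)
    rw [zero_mul] at hcv
    rw [integral_div, hcv, ← aux_translate hmeas t, smul_eq_mul]
    have h1 : S t ≠ 0 := (hpos t).ne'
    have h2 : g t ≠ 0 := (hg t).ne'
    rw [div_eq_div_iff (by positivity) h1]
    field_simp
  have hdct : Tendsto (fun t : ℝ => ∫ v in Ioi (0:ℝ), S (t + v * g t) / S t) atTop
      (𝓝 (∫ v in Ioi (0:ℝ), Real.exp (-v))) := by
    apply tendsto_integral_filter_of_dominated_convergence (fun v => 800 / (max v 20) ^ 2)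
    · exact Eventually.of_forall fun t => ((hanti t).measurable).aestronglyMeasurable
    · filter_upwards [eventually_ge_atTop T] with t ht
      rw [ae_restrict_iff' measurableSet_Ioi]
      refine Eventually.of_forall fun v hv => ?_
      have h1 := hT t ht v (le_of_lt hv)
      rw [Real.norm_eq_abs, abs_of_nonneg (div_pos (hpos _) (hpos _)).le,
        div_le_iff₀ (hpos t)]
      exact h1
    · exact aux_dbound_integrable
    · exact Eventually.of_forall fun v => h6 v
  rw [integral_exp_neg_Ioi_zero] at hdct
  exact hdct.congr fun t => (hid t).symm


private lemma aux_step11 {S f g : ℝ → ℝ} (hA : Antitone S) (hpos : ∀ t, 0 < S t)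
    (hg : ∀ t, 0 < g t)
    (h6 : ∀ x : ℝ, Tendsto (fun t : ℝ => S (t + x * g t) / S t) atTop (𝓝 (Real.exp (-x))))
    (hfg : Tendsto (fun t : ℝ => f t / g t) atTop (𝓝 1)) :
    Tendsto (fun t : ℝ => S (t + f t) / S t) atTop (𝓝 (Real.exp (-1))) := by
  rw [Metric.tendsto_nhds]
  intro ε hε
  set η : ℝ := min 1 (ε / 6) with hη
  have hηpos : 0 < η := by
    rw [hη]
    exact lt_min one_pos (by linarith)
  have hη1 : η ≤ 1 := min_le_left _ _
  have hηε : η ≤ ε / 6 := min_le_right _ _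
  have hexp3 : Real.exp 1 < 3 := by
    have := Real.exp_one_lt_d9
    linarith
  have hup : Real.exp (-(1 - η)) ≤ Real.exp (-1) + ε / 2 := by
    have h1 : Real.exp (-(1 - η)) - Real.exp (-1) = Real.exp (-1) * (Real.exp η - 1) := by
      rw [show (-(1 - η)) = -1 + η by ring, Real.exp_add]
      ring
    have h2 : Real.exp η - 1 ≤ η * Real.exp η := by
      have h3 := Real.add_one_le_exp (-η)
      have h4 : (1 - η) * Real.exp η ≤ Real.exp (-η) * Real.exp η := by
        apply mul_le_mul_of_nonneg_right (by linarith) (Real.exp_pos η).le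
      rw [← Real.exp_add] at h4
      simp at h4
      nlinarith
    have h5 : Real.exp η ≤ Real.exp 1 := Real.exp_le_exp.2 hη1
    have h6' : Real.exp (-1) ≤ 1 := Real.exp_le_one_iff.2 (by norm_num)
    have h7 : (0:ℝ) ≤ Real.exp η - 1 := by
      have := Real.one_le_exp hηpos.le
      linarith
    have ha1 : Real.exp (-1) * (Real.exp η - 1) ≤ 1 * (η * Real.exp η) :=
      mul_le_mul h6' h2 h7 zero_le_one
    have ha2 : η * Real.exp η ≤ η * 3 :=
      mul_le_mul_of_nonneg_left (by linarith) hηpos.le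
    linarith
  have hdn : Real.exp (-1) - ε / 2 ≤ Real.exp (-(1 + η)) := by
    have h1 : Real.exp (-1) - Real.exp (-(1 + η)) = Real.exp (-1) * (1 - Real.exp (-η)) := by
      rw [show (-(1 + η)) = -1 + -η by ring, Real.exp_add]
      ring
    have h2 : 1 - Real.exp (-η) ≤ η := by
      have := Real.add_one_le_exp (-η)
      linarith
    have h6' : Real.exp (-1) ≤ 1 := Real.exp_le_one_iff.2 (by norm_num)
    nlinarith [Real.exp_pos (-1)]
  have E1 : ∀ᶠ t : ℝ in atTop, dist (f t / g t) 1 < η := Metric.tendsto_nhds.1 hfg η hηpos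
  have E2 : ∀ᶠ t : ℝ in atTop,
      S (t + (1 - η) * g t) / S t < Real.exp (-(1 - η)) + ε / 2 :=
    (h6 (1 - η)).eventually_lt_const (by linarith)
  have E3 : ∀ᶠ t : ℝ in atTop,
      Real.exp (-(1 + η)) - ε / 2 < S (t + (1 + η) * g t) / S t :=
    (h6 (1 + η)).eventually_const_lt (by linarith)
  filter_upwards [E1, E2, E3] with t h1 h2 h3
  rw [Real.dist_eq, abs_sub_lt_iff] at h1
  have hf_up : f t ≤ (1 + η) * g t := by
    have : f t / g t < 1 + η := by linarith [h1.1]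
    rw [div_lt_iff₀ (hg t)] at this
    linarith
  have hf_dn : (1 - η) * g t ≤ f t := by
    have : 1 - η < f t / g t := by linarith [h1.2]
    rw [lt_div_iff₀ (hg t)] at this
    linarith
  have hub : S (t + f t) / S t ≤ S (t + (1 - η) * g t) / S t :=
    div_le_div_of_nonneg_right (hA (by linarith)) (hpos t).le
  have hlb : S (t + (1 + η) * g t) / S t ≤ S (t + f t) / S t :=
    div_le_div_of_nonneg_right (hA (by linarith)) (hpos t).le
  rw [Real.dist_eq, abs_sub_lt_iff]
  have hεq : ε / 2 + ε / 2 ≤ ε := by linarith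
  constructor
  · calc S (t + f t) / S t - Real.exp (-1) ≤
        S (t + (1 - η) * g t) / S t - Real.exp (-1) := by linarith
      _ < ε := by linarith
  · calc Real.exp (-1) - S (t + f t) / S t ≤
        Real.exp (-1) - S (t + (1 + η) * g t) / S t := by linarith
      _ < ε := by linarith


private theorem aux_key {S : ℝ → ℝ} {a b : ℕ → ℝ} (hA : Antitone S) (hpos : ∀ t, 0 < S t)
    (ha : ∀ n, 0 < a n)
    (hS : ∀ x : ℝ, Tendsto (fun n : ℕ => (n : ℝ) * S (a n * x + b n)) atTop
      (𝓝 (Real.exp (-x)))) :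
    Tendsto (fun t : ℝ => S (t + (∫ z in Ioi t, S z) / S t) / S t) atTop
      (𝓝 (Real.exp (-1))) := by
  -- b tends to infinity
  have hSb : Tendsto (fun n : ℕ => S (b n)) atTop (𝓝 0) := by
    have h0 := hS 0
    simp only [mul_zero, zero_add, neg_zero, Real.exp_zero] at h0
    have h1 : Tendsto (fun n : ℕ => ((n : ℝ) * S (b n)) * (n : ℝ)⁻¹) atTop (𝓝 (1 * 0)) :=
      h0.mul tendsto_inv_atTop_nhds_zero_nat
    rw [mul_zero] at h1
    refine h1.congr' ?_
    filter_upwards [eventually_ge_atTop 1] with n hn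
    have : (n : ℝ) ≠ 0 := by positivity
    field_simp
  have hb : Tendsto b atTop atTop := by
    rw [tendsto_atTop]
    intro M
    filter_upwards [hSb.eventually_lt_const (hpos M)] with n hn
    by_contra hcon
    push_neg at hcon
    exact absurd (hA hcon.le) (not_le.2 hn)
  -- the counting function
  set N : ℝ → ℕ := fun t => sSup {n | b n ≤ t} with hNdef
  have hbdd : ∀ t : ℝ, BddAbove {n | b n ≤ t} := by
    intro t
    obtain ⟨m, hm⟩ := eventually_atTop.1 (hb.eventually_gt_atTop t)
    refine BddAbove.mono (fun n hn => ?_) (bddAbove_Iio (a := m))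
    by_contra hcon
    simp only [mem_Iio, not_lt] at hcon
    exact absurd hn (not_le.2 (hm n hcon))
  have hNle : ∀ᶠ t : ℝ in atTop, b (N t) ≤ t := by
    filter_upwards [eventually_ge_atTop (b 0)] with t ht
    exact Nat.sSup_mem ⟨0, ht⟩ (hbdd t)
  have hNlt : ∀ᶠ t : ℝ in atTop, t < b (N t + 1) := by
    filter_upwards [eventually_ge_atTop (b 0)] with t ht
    by_contra hcon
    push_neg at hcon
    have h1 : N t + 1 ≤ N t := le_csSup (hbdd t) hcon
    omega
  have hN : Tendsto N atTop atTop := by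
    rw [tendsto_atTop]
    intro m
    filter_upwards [eventually_ge_atTop (b m)] with t ht
    exact le_csSup (hbdd t) ht
  -- Khinchin: a n / a (n+1) → 1
  have halpha : Tendsto (fun n : ℕ => a n / a (n + 1)) atTop (𝓝 1) := by
    have hrat : Tendsto (fun j : ℕ => ((j + 1 : ℕ) : ℝ) / ((j : ℕ) : ℝ)) atTop (𝓝 1) := by
      have := aux_nat_succ_div
      refine this.congr fun j => ?_
      push_cast
      ring
    exact aux_GK hA ha hS (tendsto_add_atTop_nat 1) tendsto_id one_pos hrat
  -- Gamma-variation
  have h6 : ∀ x : ℝ, Tendsto (fun t : ℝ => S (t + x * a (N t)) / S t) atTop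
      (𝓝 (Real.exp (-x))) := aux_step6 hA hpos ha hS hNle hNlt hN halpha
  -- self-neighboring of g and half-decay
  have hg : ∀ t : ℝ, 0 < a (N t) := fun t => ha (N t)
  have hhalf : ∀ᶠ t : ℝ in atTop, S (t + a (N t)) ≤ (1 / 2) * S t := by
    have h61 := h6 1
    have hlt : Real.exp (-1) < 1 / 2 := by
      rw [Real.exp_neg]
      rw [inv_lt_comm₀ (Real.exp_pos 1) (by norm_num)]
      have := Real.exp_one_gt_d9
      norm_num
      linarith
    filter_upwards [h61.eventually_lt_const hlt] with t h1
    rw [div_lt_iff₀ (hpos t)] at h1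
    rw [one_mul] at h1
    linarith
  have hself : ∀ᶠ t : ℝ in atTop, a (N (t + a (N t))) ≤ (11 / 10) * a (N t) := by
    have h7 := aux_step7 hA hpos ha hS hNle hNlt hN halpha
    filter_upwards [h7.eventually_lt_const (by norm_num : (1:ℝ) < 11 / 10)] with t h1
    rw [div_lt_iff₀ (hg t)] at h1
    linarith
  have hdom := aux_step8 hA hpos hg hhalf hself
  have h10 := aux_step10 hA hpos hg h6 hdom
  have hfg : Tendsto (fun t : ℝ => ((∫ z in Ioi t, S z) / S t) / a (N t)) atTop (𝓝 1) := by
    refine h10.congr fun t => ?_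
    rw [div_div]
  exact aux_step11 hA hpos hg h6 hfg

/-- If `F` has infinite right endpoint and belongs to the maximum domain of attraction of
the Gumbel distribution `G_0`, and `f t = (∫_t^∞ (1 - F z) dz) / (1 - F t)`, then
`(1 - F (t + f t)) / (1 - F t) → 1/e` as `t → ∞`. -/
theorem gumbel_domain_auxiliary_limit (μ : ProbabilityMeasure ℝ)
    (hend : rightEndpoint μ = ⊤) (h : MemDomAttr 0 μ)
    (f : ℝ → ℝ)
    (hf : ∀ t : ℝ, f t = (∫ z in Set.Ioi t, (1 - distrib μ z)) / (1 - distrib μ t)) :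
    Tendsto (fun t : ℝ => (1 - distrib μ (t + f t)) / (1 - distrib μ t)) atTop
      (𝓝 (1 / Real.exp 1)) := by
  have hFmono : Monotone (distrib μ) := by
    intro x y hxy
    exact NNReal.coe_le_coe.2 (μ.apply_mono (Iic_subset_Iic.2 hxy))
  have hF1 : ∀ x : ℝ, distrib μ x < 1 := by
    by_contra hcon
    push_neg at hcon
    obtain ⟨x0, hx0⟩ := hcon
    have hle : rightEndpoint μ ≤ (x0 : EReal) := by
      refine sSup_le ?_
      rintro e ⟨y, hy, rfl⟩
      rw [EReal.coe_le_coe_iff]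
      by_contra hxy
      push_neg at hxy
      have : (1:ℝ) ≤ distrib μ y := le_trans hx0 (hFmono hxy.le)
      exact absurd hy (not_lt.2 this)
    rw [hend] at hle
    exact absurd (top_le_iff.1 hle) (EReal.coe_ne_top x0)
  have hpos : ∀ t : ℝ, 0 < 1 - distrib μ t := fun t => by linarith [hF1 t]
  have hA : Antitone fun t : ℝ => 1 - distrib μ t := fun x y hxy =>
    sub_le_sub_left (hFmono hxy) 1
  obtain ⟨a, b, hapos, hconv⟩ := h
  have hcont : ∀ x : ℝ, ContinuousAt (evCdf 0) x := by
    have he : evCdf 0 = fun y => Real.exp (-Real.exp (-y)) := funext fun y => by simp [evCdf]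
    rw [he]
    intro x
    exact (Continuous.continuousAt (by fun_prop))
  have hS : ∀ x : ℝ, Tendsto (fun n : ℕ => (n : ℝ) * (1 - distrib μ (a n * x + b n))) atTop
      (𝓝 (Real.exp (-x))) := by
    intro x
    have hGpos : 0 < Real.exp (-Real.exp (-x)) := Real.exp_pos _
    have hGlt : Real.exp (-Real.exp (-x)) < 1 :=
      Real.exp_lt_one_iff.2 (neg_lt_zero.2 (Real.exp_pos _))
    have h0 := hconv x (hcont x)
    have h0' : evCdf 0 x = Real.exp (-Real.exp (-x)) := by simp [evCdf]
    rw [h0'] at h0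
    have h1 := aux_pow_to_lin (F := fun n => distrib μ (a n * x + b n))
      (fun n => NNReal.coe_nonneg _) (fun n => hF1 _) hGpos hGlt h0
    rw [Real.log_exp, neg_neg] at h1
    exact h1
  have hkey := aux_key hA hpos hapos hS
  have hone : (1 : ℝ) / Real.exp 1 = Real.exp (-1) := by rw [Real.exp_neg, one_div]
  rw [hone]
  refine hkey.congr fun t => ?_
  rw [hf t]
end
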